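/- arXiv:0801.3986 — 10 statements merged into one kernel-verified Lean document; each statement's English description precedes it below -/
import Mathlib

section
/- Let n and d be positive integers with d ≤ n, let x ∈ S_n be a permutation of weight i, and let j be a positive integer. Then the number of permutations y ∈ S_n of weight j with Hamming distance d(x,y) ≤ d−1 is at most L_{i,j}. -/
open Finset

/-- Hamming distance between two permutations of `{0,…,n-1}`. -/
def permDist {n : ℕ} (x y : Equiv.Perm (Fin n)) : ℕ :=
  (Finset.univ.filter fun i => x i ≠ y i).card

/-- Weight of a permutation: number of non-fixed points. -/
def permWt {n : ℕ} (x : Equiv.Perm (Fin n)) : ℕ :=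
  (Finset.univ.filter fun i => x i ≠ i).card

/-- `C` is an `(n,d)` permutation array. -/
def IsPA (n d : ℕ) (C : Finset (Equiv.Perm (Fin n))) : Prop :=
  ∀ x ∈ C, ∀ y ∈ C, x ≠ y → d ≤ permDist x y

/-- `P(n,d)`: the maximum size of an `(n,d)` permutation array. -/
noncomputable def Pmax (n d : ℕ) : ℕ :=
  sSup {m | ∃ C : Finset (Equiv.Perm (Fin n)), IsPA n d C ∧ C.card = m}

/-- `P[n,e]`: the maximum size of a subset of `S_n` with pairwise distances at most `e`. -/
noncomputable def PmaxLe (n e : ℕ) : ℕ :=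
  sSup {m | ∃ Γ : Finset (Equiv.Perm (Fin n)),
    (∀ x ∈ Γ, ∀ y ∈ Γ, x ≠ y → permDist x y ≤ e) ∧ Γ.card = m}

/-- `V(n,r) = Σ_{i=0}^{r} C(n,i)·D_i`. -/
def V (n r : ℕ) : ℕ := ∑ i ∈ Finset.range (r + 1), Nat.choose n i * numDerangements i

/-- `V₂(n,r) = Σ_{i=0}^{r} C(n,i)`. -/
def V2 (n r : ℕ) : ℕ := ∑ i ∈ Finset.range (r + 1), Nat.choose n i

/-- `L_{i,j}` (depending also on `n` and `d`). -/
def L (n d i j : ℕ) : ℕ :=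
  ∑ k ∈ Finset.Icc ((i + j + 1 - d + 1) / 2) (min i j),
    ∑ l ∈ Finset.range (min (d + 2 * k - i - j - 1) k + 1),
      Nat.choose i k * Nat.choose (n - i) (j - k) * Nat.choose k l *
        Nat.factorial (l + j - k)

/-- `T`: number of unordered pairs of distinct permutations in `S_n`, each of weight
between `1` and `d-1`, with Hamming distance at most `d-1`. -/
def Tperm (n d : ℕ) : ℕ :=
  ((Finset.univ : Finset (Equiv.Perm (Fin n) × Equiv.Perm (Fin n))).filter
    (fun p => p.1 ≠ p.2 ∧ 1 ≤ permWt p.1 ∧ permWt p.1 ≤ d - 1 ∧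
      1 ≤ permWt p.2 ∧ permWt p.2 ≤ d - 1 ∧ permDist p.1 p.2 ≤ d - 1)).card / 2

/-- Hamming weight of a binary vector. -/
def binWt {n : ℕ} (u : Fin n → Bool) : ℕ := (Finset.univ.filter fun i => u i ≠ false).card

/-- Hamming distance between binary vectors. -/
def binDist {n : ℕ} (u v : Fin n → Bool) : ℕ := (Finset.univ.filter fun i => u i ≠ v i).card

/-- `T′`: number of unordered pairs of distinct nonzero binary vectors of length `n`,
each of Hamming weight at most `d-1`, with Hamming distance at most `d-1`. -/
def Tbin (n d : ℕ) : ℕ :=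
  ((Finset.univ : Finset ((Fin n → Bool) × (Fin n → Bool))).filter
    (fun p => p.1 ≠ p.2 ∧ p.1 ≠ (fun _ => false) ∧ p.2 ≠ (fun _ => false) ∧
      binWt p.1 ≤ d - 1 ∧ binWt p.2 ≤ d - 1 ∧ binDist p.1 p.2 ≤ d - 1)).card / 2

lemma inner_bound {n : ℕ} (x : Equiv.Perm (Fin n)) (K D S : Finset (Fin n))
    (hDK : D ⊆ K) (hKS : Disjoint K S) (F2 : Finset (Equiv.Perm (Fin n)))
    (hF2 : ∀ y ∈ F2, (∀ p, y p ≠ p ↔ p ∈ K ∪ S) ∧ (∀ p ∈ K, (x p = y p ↔ p ∉ D))) :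
    F2.card ≤ (D.card + S.card).factorial := by
  classical
  rcases F2.eq_empty_or_nonempty with h | ⟨y₀, hy₀⟩
  · simp [h]
  set T : Finset (Fin n) := (K ∪ S) \ (K \ D).image x with hT
  have suppmap : ∀ y : Equiv.Perm (Fin n), (∀ p, y p ≠ p ↔ p ∈ K ∪ S) →
      ∀ p ∈ K ∪ S, y p ∈ K ∪ S := by
    intro y hy p hp
    rw [← hy]
    intro h
    exact (hy p).mpr hp (y.injective h)
  obtain ⟨h₀supp, h₀agree⟩ := hF2 y₀ hy₀
  have himg : (K \ D).image x ⊆ K ∪ S := by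
    intro q hq
    simp only [mem_image] at hq
    obtain ⟨p, hp, rfl⟩ := hq
    rw [mem_sdiff] at hp
    have hxy : x p = y₀ p := (h₀agree p hp.1).mpr hp.2
    rw [hxy]
    exact suppmap y₀ h₀supp p (mem_union_left _ hp.1)
  have hDS : Disjoint D S := disjoint_of_subset_left hDK hKS
  have hTcard : T.card = D.card + S.card := by
    have h1 := card_sdiff_of_subset himg
    have h2 : (K ∪ S).card = K.card + S.card := card_union_of_disjoint hKS
    have h3 : ((K \ D).image x).card = K.card - D.card := by
      rw [card_image_of_injective _ x.injective, card_sdiff_of_subset hDK]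
    have h4 : D.card ≤ K.card := card_le_card hDK
    rw [← hT] at h1
    omega
  have hDScard : (D ∪ S).card = D.card + S.card := card_union_of_disjoint hDS
  have hmem : ∀ y ∈ F2, ∀ p ∈ D ∪ S, y p ∈ T := by
    intro y hy p hp
    obtain ⟨hsupp, hagree⟩ := hF2 y hy
    have hpKS : p ∈ K ∪ S := by
      rcases mem_union.mp hp with h | h
      · exact mem_union_left _ (hDK h)
      · exact mem_union_right _ h
    have h1 : y p ∈ K ∪ S := suppmap y hsupp p hpKS
    rw [hT, mem_sdiff]
    refine ⟨h1, ?_⟩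
    intro hcon
    simp only [mem_image] at hcon
    obtain ⟨q, hq, hq2⟩ := hcon
    rw [mem_sdiff] at hq
    have hxe : x q = y q := (hagree q hq.1).mpr hq.2
    have hqp : q = p := y.injective (by rw [← hxe, hq2])
    subst hqp
    rcases mem_union.mp hp with h | h
    · exact hq.2 h
    · exact (Finset.disjoint_left.mp hKS hq.1) h
  let Φ : ↥F2 → ((D ∪ S : Finset (Fin n)) ↪ (T : Finset (Fin n))) := fun y =>
    ⟨fun p => ⟨y.1 p.1, hmem y.1 y.2 p.1 p.2⟩, by
      intro a b hab
      simp only [Subtype.mk.injEq] at hab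
      exact Subtype.ext (y.1.injective hab)⟩
  have hΦ : Function.Injective Φ := by
    intro y z hyz
    have heq : ∀ q ∈ D ∪ S, y.1 q = z.1 q := by
      intro q hq
      have h := DFunLike.congr_fun hyz (⟨q, hq⟩ : (D ∪ S : Finset (Fin n)))
      exact congrArg Subtype.val h
    apply Subtype.ext
    apply Equiv.ext
    intro p
    obtain ⟨hysupp, hyagree⟩ := hF2 y.1 y.2
    obtain ⟨hzsupp, hzagree⟩ := hF2 z.1 z.2
    by_cases hDSp : p ∈ D ∪ S
    · exact heq p hDSp
    · by_cases hKp : p ∈ K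
      · have hpD : p ∉ D := fun h => hDSp (mem_union_left _ h)
        have h1 : x p = y.1 p := (hyagree p hKp).mpr hpD
        have h2 : x p = z.1 p := (hzagree p hKp).mpr hpD
        rw [← h1, ← h2]
      · have hpKS : p ∉ K ∪ S := by
          intro h
          rcases mem_union.mp h with h | h
          · exact hKp h
          · exact hDSp (mem_union_right _ h)
        have h1 : y.1 p = p := by
          by_contra h
          exact hpKS ((hysupp p).mp h)
        have h2 : z.1 p = p := by
          by_contra h
          exact hpKS ((hzsupp p).mp h)
        rw [h1, h2]
  have hcard := Fintype.card_le_of_injective Φ hΦ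
  rw [Fintype.card_coe] at hcard
  calc F2.card ≤ Fintype.card ((D ∪ S : Finset (Fin n)) ↪ (T : Finset (Fin n))) := hcard
    _ = (Fintype.card (T : Finset (Fin n))).descFactorial
          (Fintype.card ((D ∪ S : Finset (Fin n)))) := Fintype.card_embedding_eq
    _ = (D.card + S.card).factorial := by
          rw [Fintype.card_coe, Fintype.card_coe, hTcard, hDScard, Nat.descFactorial_self]

theorem stmt3 (n d i j : ℕ) (hn : 0 < n) (hd : 0 < d) (hdn : d ≤ n) (hj : 0 < j)
    (x : Equiv.Perm (Fin n)) (hx : permWt x = i) :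
    (Finset.univ.filter fun y : Equiv.Perm (Fin n) =>
        permWt y = j ∧ permDist x y ≤ d - 1).card ≤ L n d i j := by
  classical
  set A : Finset (Fin n) := univ.filter (fun p => x p ≠ p) with hAdef
  have hAcard : A.card = i := hx
  set S0 : Finset (Equiv.Perm (Fin n)) :=
    univ.filter (fun y => permWt y = j ∧ permDist x y ≤ d - 1) with hS0def
  set Bf : Equiv.Perm (Fin n) → Finset (Fin n) :=
    fun y => univ.filter (fun p => y p ≠ p) with hBfdef
  set Kf : Equiv.Perm (Fin n) → Finset (Fin n) := fun y => A ∩ Bf y with hKfdef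
  set Df : Equiv.Perm (Fin n) → Finset (Fin n) :=
    fun y => (Kf y).filter (fun p => x p ≠ y p) with hDfdef
  set Sf : Equiv.Perm (Fin n) → Finset (Fin n) := fun y => Bf y \ A with hSfdef
  set F : Equiv.Perm (Fin n) → (_ : ℕ) × ℕ :=
    fun y => ⟨(Kf y).card, (Df y).card⟩ with hFdef
  set t : Finset ((_ : ℕ) × ℕ) :=
    (Finset.Icc ((i + j + 1 - d + 1) / 2) (min i j)).sigma
      (fun k => Finset.range (min (d + 2 * k - i - j - 1) k + 1)) with htdef
  -- basic facts for y ∈ S0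
  have fact1 : ∀ y : Equiv.Perm (Fin n), (A \ Bf y).card + (Kf y).card = i := by
    intro y
    rw [← hAcard, hKfdef]
    exact card_sdiff_add_card_inter A (Bf y)
  have fact2 : ∀ y ∈ S0, (Sf y).card + (Kf y).card = j := by
    intro y hy
    have hB : (Bf y).card = j := (mem_filter.mp hy).2.1
    show (Bf y \ A).card + (A ∩ Bf y).card = j
    rw [inter_comm, ← hB]
    exact card_sdiff_add_card_inter (Bf y) A
  have fact3 : ∀ y : Equiv.Perm (Fin n),
      permDist x y = (A \ Bf y).card + ((Sf y).card + (Df y).card) := by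
    intro y
    have hset : (univ.filter fun p => x p ≠ y p) = (A \ Bf y) ∪ ((Sf y) ∪ (Df y)) := by
      ext p
      simp only [mem_filter, mem_union, mem_sdiff, mem_inter, mem_univ, true_and,
        hAdef, hBfdef, hSfdef, hDfdef, hKfdef]
      constructor
      · intro h
        by_cases h1 : x p = p <;> by_cases h2 : y p = p
        · exact absurd (h1.trans h2.symm) h
        · refine Or.inr (Or.inl ⟨?_, ?_⟩) <;> simp [h1, h2]
        · exact Or.inl (by simp [h1, h2])
        · exact Or.inr (Or.inr (by simp [h1, h2, h]))
      · rintro (⟨h1, h2⟩ | ⟨h1, h2⟩ | ⟨⟨h1, h2⟩, h3⟩)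
        · simp only [mem_filter, mem_univ, true_and, not_not] at h1 h2
          rw [h2]; exact h1
        · simp only [mem_filter, mem_univ, true_and, not_not] at h1 h2
          rw [h2]; exact fun h => h1 h.symm
        · exact h3
      
    have hd1 : Disjoint (A \ Bf y) ((Sf y) ∪ (Df y)) := by
      rw [disjoint_union_right]
      constructor
      · exact disjoint_of_subset_right (sdiff_subset) sdiff_disjoint
      · refine disjoint_left.mpr fun p hp hp2 => ?_
        have : p ∈ Bf y := (mem_inter.mp (mem_filter.mp hp2).1).2
        exact (mem_sdiff.mp hp).2 this
    have hd2 : Disjoint (Sf y) (Df y) := by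
      refine disjoint_left.mpr fun p hp hp2 => ?_
      have : p ∈ A := (mem_inter.mp (mem_filter.mp hp2).1).1
      exact (mem_sdiff.mp hp).2 this
    show (univ.filter fun p => x p ≠ y p).card = _
    rw [hset, card_union_of_disjoint hd1, card_union_of_disjoint hd2]
  have fact4 : ∀ y : Equiv.Perm (Fin n), (Df y).card ≤ (Kf y).card :=
    fun y => card_le_card (filter_subset _ _)
  -- F maps S0 into t
  have hmaps : ∀ y ∈ S0, F y ∈ t := by
    intro y hy
    have h1 := fact1 y
    have h2 := fact2 y hy
    have h3 := fact3 y
    have h4 := fact4 y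
    have h5 : permDist x y ≤ d - 1 := (mem_filter.mp hy).2.2
    simp only [htdef, hFdef, mem_sigma, mem_Icc, mem_range]
    omega
  -- rewrite L as a sum over t
  have hL : L n d i j = ∑ b ∈ t, Nat.choose i b.1 * Nat.choose (n - i) (j - b.1) *
      Nat.choose b.1 b.2 * Nat.factorial (b.2 + j - b.1) := by
    rw [L, htdef, Finset.sum_sigma]
  rw [hL, card_eq_sum_card_fiberwise hmaps]
  apply Finset.sum_le_sum
  rintro ⟨k, l⟩ hb
  simp only [htdef, mem_sigma, mem_Icc, mem_range] at hb
  dsimp only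
  obtain ⟨⟨hk1, hk2⟩, hl⟩ := hb
  have hkj : k ≤ j := le_trans hk2 (min_le_right _ _)
  have hki : k ≤ i := le_trans hk2 (min_le_left _ _)
  -- second level
  set t2 : Finset ((_ : Finset (Fin n)) × (Finset (Fin n) × Finset (Fin n))) :=
    (powersetCard k A).sigma
      (fun K => powersetCard l K ×ˢ powersetCard (j - k) (univ \ A)) with ht2def
  set G : Equiv.Perm (Fin n) → (_ : Finset (Fin n)) × (Finset (Fin n) × Finset (Fin n)) :=
    fun y => ⟨Kf y, (Df y, Sf y)⟩ with hGdef
  set fib : Finset (Equiv.Perm (Fin n)) := S0.filter (fun y => F y = ⟨k, l⟩) with hfibdef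
  have hfibmem : ∀ y ∈ fib, y ∈ S0 ∧ (Kf y).card = k ∧ (Df y).card = l := by
    intro y hy
    rw [hfibdef, mem_filter] at hy
    obtain ⟨h1, h2⟩ := hy
    have e1 := congrArg Sigma.fst h2
    have e2 := congrArg Sigma.snd h2
    simp only [hFdef] at e1 e2
    exact ⟨h1, e1, e2⟩
  have hGmaps : ∀ y ∈ fib, G y ∈ t2 := by
    intro y hy
    obtain ⟨hy0, hK, hD⟩ := hfibmem y hy
    simp only [ht2def, hGdef, mem_sigma, mem_product, mem_powersetCard]
    refine ⟨⟨inter_subset_left, hK⟩, ⟨filter_subset _ _, hD⟩, ?_, ?_⟩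
    · rw [hSfdef]
      exact sdiff_subset_sdiff (subset_univ _) (le_refl _)
    · have := fact2 y hy0
      omega
  have ht2card : t2.card = Nat.choose i k * (Nat.choose k l * Nat.choose (n - i) (j - k)) := by
    rw [ht2def, card_sigma]
    have huA : (univ \ A).card = n - i := by
      rw [card_sdiff_of_subset (subset_univ _), card_univ, Fintype.card_fin, hAcard]
    rw [Finset.sum_congr rfl (fun K hK => ?_), Finset.sum_const, card_powersetCard, hAcard,
      smul_eq_mul]
    rw [card_product, card_powersetCard, card_powersetCard, (mem_powersetCard.mp hK).2, huA]
  -- per-fiber bound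
  have hinner : ∀ c ∈ t2, (fib.filter (fun y => G y = c)).card ≤
      Nat.factorial (l + (j - k)) := by
    rintro ⟨K, D, S⟩ hc
    simp only [ht2def, mem_sigma, mem_product, mem_powersetCard] at hc
    obtain ⟨⟨hKA, hKcard⟩, ⟨hDK, hDcard⟩, hSA, hScard⟩ := hc
    have hKS : Disjoint K S := by
      refine disjoint_left.mpr fun p hp hp2 => ?_
      exact (mem_sdiff.mp (hSA hp2)).2 (hKA hp)
    have hbd := inner_bound x K D S hDK hKS (fib.filter (fun y => G y = ⟨K, (D, S)⟩)) ?_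
    · rw [hDcard, hScard] at hbd
      exact hbd
    · intro y hy
      rw [mem_filter] at hy
      obtain ⟨hyfib, hyG⟩ := hy
      have hKy := congrArg Sigma.fst hyG
      have hDy := congrArg (fun c => (Sigma.snd c).1) hyG
      have hSy := congrArg (fun c => (Sigma.snd c).2) hyG
      simp only [hGdef] at hKy hDy hSy
      constructor
      · intro p
        have hBKS : Bf y = K ∪ S := by
          rw [← hKy, ← hSy, hKfdef, hSfdef]
          ext q
          simp only [mem_union, mem_inter, mem_sdiff]
          by_cases hq : q ∈ A <;> simp [hq]
        have : (y p ≠ p) ↔ p ∈ Bf y := by simp [hBfdef]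
        rw [this, hBKS]
      · intro p hp
        have hpK : p ∈ Kf y := by rw [hKy]; exact hp
        rw [← hDy]
        show x p = y p ↔ p ∉ (Kf y).filter (fun p => x p ≠ y p)
        simp only [mem_filter, not_and, not_not]
        exact ⟨fun he _ => he, fun h => h hpK⟩
  calc fib.card = ∑ c ∈ t2, (fib.filter (fun y => G y = c)).card :=
        card_eq_sum_card_fiberwise hGmaps
    _ ≤ ∑ _c ∈ t2, Nat.factorial (l + (j - k)) := Finset.sum_le_sum hinner
    _ = t2.card * Nat.factorial (l + (j - k)) := by rw [Finset.sum_const, smul_eq_mul]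
    _ = Nat.choose i k * Nat.choose (n - i) (j - k) * Nat.choose k l *
          Nat.factorial (l + j - k) := by
        rw [ht2card]
        have : l + (j - k) = l + j - k := by omega
        rw [this]; ring
end

section
/- Let n and d be positive integers with d ≤ n. Then T ≤ (1/2)·Σ_{i=2}^{d−1} Σ_{j=2}^{d−1} C(n,i)·D_i·L_{i,j}. -/
open Finset

section Helpers
open Equiv

variable {n : ℕ}

def msupp (y : Perm (Fin n)) : Finset (Fin n) := univ.filter fun p => y p ≠ p

lemma perm_maps (y : Perm (Fin n)) (s : Finset (Fin n)) (h : ∀ p ∉ s, y p = p) :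
    ∀ p, p ∈ s ↔ y p ∈ s := by
  intro p
  constructor
  · intro hp
    by_contra hyp
    have := h _ hyp
    have h2 : y p = p := y.injective this
    rw [h2] at hyp; exact hyp hp
  · intro hp
    by_contra hps
    rw [h p hps] at hp; exact hps hp

/-- Permutations agreeing with a fixed `y₀` off `s` number at most `s.card !`. -/
lemma card_agree_le (s : Finset (Fin n)) (y₀ : Perm (Fin n)) :
    (univ.filter fun y : Perm (Fin n) => ∀ p ∉ s, y p = y₀ p).card ≤ s.card.factorial := by
  have key : ∀ y : Perm (Fin n), (∀ p ∉ s, y p = y₀ p) → ∀ p, p ∈ s ↔ (y₀⁻¹ * y) p ∈ s := by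
    intro y h
    refine perm_maps _ _ (fun p hp => ?_)
    simp [Perm.mul_apply, h p hp]
  classical
  have : (univ.filter fun y : Perm (Fin n) => ∀ p ∉ s, y p = y₀ p).card
      ≤ (univ : Finset (Perm ↥s)).card := by
    apply Finset.card_le_card_of_injOn
      (fun y => if h : ∀ p ∉ s, y p = y₀ p then (y₀⁻¹ * y).subtypePerm (fun p => (key y h p).symm) else 1)
      (fun _ _ => mem_univ _)
    intro y₁ h₁ y₂ h₂ heq
    simp only [mem_coe, mem_filter, mem_univ, true_and] at h₁ h₂
    simp only [dif_pos h₁, dif_pos h₂] at heq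
    ext p
    by_cases hp : p ∈ s
    · have := congrArg (fun f => (f ⟨p, hp⟩ : Fin n)) heq
      have h3 : y₀⁻¹ (y₁ p) = y₀⁻¹ (y₂ p) := by simpa [Perm.mul_apply] using this
      exact congrArg Fin.val (y₀⁻¹.injective h3)
    · rw [h₁ p hp, h₂ p hp]
  simpa [Fintype.card_perm, Fintype.card_coe] using this

lemma card_msupp_le (s : Finset (Fin n)) :
    (univ.filter fun x : Perm (Fin n) => msupp x = s).card ≤ numDerangements s.card := by
  classical
  have key : ∀ x : Perm (Fin n), msupp x = s → ∀ p, p ∈ s ↔ x p ∈ s := by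
    intro x h
    refine perm_maps _ _ (fun p hp => ?_)
    rw [← h] at hp
    simpa [msupp] using hp
  have : (univ.filter fun x : Perm (Fin n) => msupp x = s).card
      ≤ (Set.toFinset (derangements ↥s)).card := by
    apply Finset.card_le_card_of_injOn
      (fun x => if h : msupp x = s then x.subtypePerm (fun p => (key x h p).symm) else 1)
    · intro x hx
      simp only [mem_coe, mem_filter, mem_univ, true_and] at hx
      simp only [mem_coe]
      rw [dif_pos hx]
      simp only [Set.mem_toFinset]
      intro a
      have hpa : (a : Fin n) ∈ msupp x := hx ▸ a.2
      simp only [msupp, mem_filter] at hpa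
      intro hcon
      exact hpa.2 (congrArg Subtype.val hcon)
    · intro x₁ h₁ x₂ h₂ heq
      simp only [mem_coe, mem_filter, mem_univ, true_and] at h₁ h₂
      simp only [dif_pos h₁, dif_pos h₂] at heq
      ext p
      by_cases hp : p ∈ s
      · have := congrArg (fun f => ((f ⟨p, hp⟩ : ↥s) : Fin n)) heq
        exact congrArg Fin.val (by simpa using this)
      · have e1 : x₁ p = p := by
          rw [← h₁] at hp; simpa [msupp] using hp
        have e2 : x₂ p = p := by
          rw [← h₂] at hp; simpa [msupp] using hp
        rw [e1, e2]
  calc (univ.filter fun x : Perm (Fin n) => msupp x = s).card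
      ≤ (Set.toFinset (derangements ↥s)).card := this
    _ = numDerangements s.card := by
        rw [Set.toFinset_card, card_derangements_eq_numDerangements, Fintype.card_coe]

lemma card_wt_le (i : ℕ) :
    (univ.filter fun x : Perm (Fin n) => permWt x = i).card ≤ n.choose i * numDerangements i := by
  classical
  rw [card_eq_sum_card_fiberwise (f := msupp) (t := univ.powersetCard i)
    (fun x hx => by
      simp only [mem_coe, mem_filter, mem_univ, true_and] at hx
      exact mem_powersetCard.2 ⟨subset_univ _, hx⟩)]
  calc ∑ s ∈ univ.powersetCard i, ((univ.filter fun x : Perm (Fin n) => permWt x = i).filter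
          fun x => msupp x = s).card
      ≤ ∑ s ∈ univ.powersetCard i, numDerangements i := by
        refine Finset.sum_le_sum fun s hs => ?_
        have hcard : s.card = i := (mem_powersetCard.1 hs).2
        calc ((univ.filter fun x : Perm (Fin n) => permWt x = i).filter
                fun x => msupp x = s).card
            ≤ (univ.filter fun x : Perm (Fin n) => msupp x = s).card := by
              apply Finset.card_le_card
              intro x hx
              simp only [mem_filter] at hx ⊢
              exact ⟨mem_univ _, hx.2⟩
          _ ≤ numDerangements s.card := card_msupp_le s
          _ = numDerangements i := by rw [hcard]
    _ = n.choose i * numDerangements i := by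
        rw [Finset.sum_const, Finset.card_powersetCard, card_univ, Fintype.card_fin, smul_eq_mul]

lemma counts_le (x y : Equiv.Perm (Fin n)) :
    (msupp x \ msupp y).card + (msupp y \ msupp x).card +
      ((msupp x ∩ msupp y).filter fun p => x p ≠ y p).card ≤ permDist x y := by
  classical
  set S1 := msupp x \ msupp y
  set S2 := msupp y \ msupp x
  set S3 := (msupp x ∩ msupp y).filter fun p => x p ≠ y p
  have hsub : S1 ∪ S2 ∪ S3 ⊆ univ.filter fun p => x p ≠ y p := by
    intro p hp
    simp only [S1, S2, S3, mem_union, mem_sdiff, mem_filter, mem_inter, msupp,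
      mem_univ, true_and] at hp ⊢
    rcases hp with (⟨hx1, hy1⟩ | ⟨hy1, hx1⟩) | ⟨_, h⟩
    · push_neg at hy1; rw [hy1]; exact hx1
    · push_neg at hx1; rw [hx1]; exact fun h => hy1 h.symm
    · exact h
  have hd12 : Disjoint S1 S2 := by
    simp only [S1, S2]
    exact disjoint_sdiff_sdiff
  have hd3 : Disjoint (S1 ∪ S2) S3 := by
    rw [disjoint_union_left]
    constructor
    · refine Finset.disjoint_left.2 fun p hp hp3 => ?_
      simp only [S1, mem_sdiff] at hp
      simp only [S3, mem_filter, mem_inter] at hp3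
      exact hp.2 hp3.1.2
    · refine Finset.disjoint_left.2 fun p hp hp3 => ?_
      simp only [S2, mem_sdiff] at hp
      simp only [S3, mem_filter, mem_inter] at hp3
      exact hp.2 hp3.1.1
  calc S1.card + S2.card + S3.card
      = (S1 ∪ S2 ∪ S3).card := by
        rw [Finset.card_union_of_disjoint hd3, Finset.card_union_of_disjoint hd12]
    _ ≤ (univ.filter fun p => x p ≠ y p).card := Finset.card_le_card hsub
    _ = permDist x y := rfl

lemma card_close_le (d i j : ℕ) (hd : 0 < d) (x : Equiv.Perm (Fin n))
    (hx : permWt x = i) :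
    (univ.filter fun y : Equiv.Perm (Fin n) =>
      permWt y = j ∧ permDist x y ≤ d - 1).card ≤ L n d i j := by
  classical
  set A := msupp x with hAdef
  have hA : A.card = i := hx
  set Y := univ.filter fun y : Equiv.Perm (Fin n) =>
    permWt y = j ∧ permDist x y ≤ d - 1 with hYdef
  -- basic facts for members of Y
  have facts : ∀ y ∈ Y, (msupp y).card = j ∧
      (A ∩ msupp y).card ≤ i ∧ (A ∩ msupp y).card ≤ j ∧
      ((A ∩ msupp y).filter fun p => x p ≠ y p).card ≤ (A ∩ msupp y).card ∧
      (i - (A ∩ msupp y).card) + (j - (A ∩ msupp y).card) +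
        ((A ∩ msupp y).filter fun p => x p ≠ y p).card ≤ d - 1 ∧
      (msupp y \ A).card = j - (A ∩ msupp y).card := by
    intro y hy
    simp only [Y, mem_filter, mem_univ, true_and] at hy
    obtain ⟨hwj, hdist⟩ := hy
    have hB : (msupp y).card = j := hwj
    have e1 : (A ∩ msupp y).card + (A \ msupp y).card = i := by
      rw [Finset.card_inter_add_card_sdiff, hA]
    have e2 : (A ∩ msupp y).card + (msupp y \ A).card = j := by
      rw [Finset.inter_comm, Finset.card_inter_add_card_sdiff, hB]
    have hc := counts_le x y
    have hle : (A \ msupp y).card + (msupp y \ A).card +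
        ((A ∩ msupp y).filter fun p => x p ≠ y p).card ≤ d - 1 :=
      le_trans hc hdist
    have hlk : ((A ∩ msupp y).filter fun p => x p ≠ y p).card ≤ (A ∩ msupp y).card :=
      Finset.card_le_card (Finset.filter_subset _ _)
    refine ⟨hB, by omega, by omega, hlk, by omega, by omega⟩
  have hmem1 : ∀ y ∈ Y, (A ∩ msupp y).card ∈ Finset.Icc ((i + j + 1 - d + 1) / 2) (min i j) := by
    intro y hy
    obtain ⟨_, h1, h2, h3, h4, _⟩ := facts y hy
    rw [mem_Icc]
    omega
  rw [Finset.card_eq_sum_card_fiberwise hmem1]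
  unfold L
  refine Finset.sum_le_sum fun k hk => ?_
  rw [mem_Icc] at hk
  obtain ⟨hk1, hk2⟩ := hk
  set Yk := Y.filter fun y => (A ∩ msupp y).card = k with hYk
  have hmem2 : ∀ y ∈ Yk, ((A ∩ msupp y).filter fun p => x p ≠ y p).card ∈
      Finset.range (min (d + 2 * k - i - j - 1) k + 1) := by
    intro y hy
    rw [hYk, mem_filter] at hy
    obtain ⟨hyY, hkk⟩ := hy
    obtain ⟨_, h1, h2, h3, h4, _⟩ := facts y hyY
    rw [mem_range]
    omega
  rw [Finset.card_eq_sum_card_fiberwise hmem2]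
  refine Finset.sum_le_sum fun l hl => ?_
  set Ykl := Yk.filter fun y => ((A ∩ msupp y).filter fun p => x p ≠ y p).card = l with hYkl
  -- fiber over K
  have hmem3 : ∀ y ∈ Ykl, A ∩ msupp y ∈ Finset.powersetCard k A := by
    intro y hy
    rw [hYkl, mem_filter, hYk, mem_filter] at hy
    exact Finset.mem_powersetCard.2 ⟨Finset.inter_subset_left, hy.1.2⟩
  rw [Finset.card_eq_sum_card_fiberwise hmem3]
  have step : ∀ K ∈ Finset.powersetCard k A,
      (Ykl.filter fun y => A ∩ msupp y = K).card ≤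
        Nat.choose (n - i) (j - k) * (Nat.choose k l * Nat.factorial (l + j - k)) := by
    intro K hK
    obtain ⟨hKA, hKc⟩ := Finset.mem_powersetCard.1 hK
    set Z := Ykl.filter fun y => A ∩ msupp y = K with hZ
    have hmem4 : ∀ y ∈ Z, msupp y \ A ∈ Finset.powersetCard (j - k) Aᶜ := by
      intro y hy
      rw [hZ, mem_filter, hYkl, mem_filter, hYk, mem_filter] at hy
      obtain ⟨⟨⟨hyY, hck⟩, _⟩, _⟩ := hy
      obtain ⟨_, _, _, _, _, h6⟩ := facts y hyY
      refine Finset.mem_powersetCard.2 ⟨fun p hp => ?_, by rw [h6, hck]⟩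
      rw [Finset.mem_compl]
      exact (Finset.mem_sdiff.1 hp).2
    rw [Finset.card_eq_sum_card_fiberwise hmem4]
    have step2 : ∀ Bm ∈ Finset.powersetCard (j - k) Aᶜ,
        ((Z.filter fun y => msupp y \ A = Bm)).card ≤
          Nat.choose k l * Nat.factorial (l + j - k) := by
      intro Bm hBm
      obtain ⟨hBmA, hBmc⟩ := Finset.mem_powersetCard.1 hBm
      set W := Z.filter fun y => msupp y \ A = Bm with hW
      have hmem5 : ∀ y ∈ W, ((A ∩ msupp y).filter fun p => x p ≠ y p) ∈
          Finset.powersetCard l K := by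
        intro y hy
        rw [hW, mem_filter, hZ, mem_filter, hYkl, mem_filter] at hy
        obtain ⟨⟨⟨_, hl⟩, hKy⟩, _⟩ := hy
        refine Finset.mem_powersetCard.2 ⟨?_, hl⟩
        rw [hKy] at *
        exact Finset.filter_subset _ _
      rw [Finset.card_eq_sum_card_fiberwise hmem5]
      have step3 : ∀ D ∈ Finset.powersetCard l K,
          ((W.filter fun y => ((A ∩ msupp y).filter fun p => x p ≠ y p) = D)).card ≤
            Nat.factorial (l + j - k) := by
        intro D hD
        obtain ⟨hDK, hDc⟩ := Finset.mem_powersetCard.1 hD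
        set F := W.filter fun y => ((A ∩ msupp y).filter fun p => x p ≠ y p) = D with hF
        rcases F.eq_empty_or_nonempty with he | ⟨y₀, hy₀⟩
        · rw [he]; simp
        · -- every member of F agrees with y₀ off D ∪ Bm
          have hprop : ∀ y ∈ F, ∀ p ∉ D ∪ Bm, y p = y₀ p := by
            have hgen : ∀ y ∈ F, ∀ p ∉ D ∪ Bm,
                (p ∈ K → y p = x p) ∧ (p ∉ K → y p = p) := by
              intro y hy p hp
              rw [hF, mem_filter, hW, mem_filter, hZ, mem_filter] at hy
              obtain ⟨⟨⟨_, hKy⟩, hBy⟩, hDy⟩ := hy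
              rw [Finset.mem_union] at hp
              push_neg at hp
              constructor
              · intro hpK
                by_contra hne
                have : p ∈ (A ∩ msupp y).filter fun p => x p ≠ y p := by
                  rw [hKy, mem_filter]
                  exact ⟨hpK, fun h => hne h.symm⟩
                rw [hDy] at this
                exact hp.1 this
              · intro hpK
                by_contra hne
                have hpy : p ∈ msupp y := by
                  simp only [msupp, mem_filter, mem_univ, true_and]
                  exact hne
                by_cases hpA : p ∈ A
                · exact hpK (hKy ▸ Finset.mem_inter.2 ⟨hpA, hpy⟩)
                · exact hp.2 (hBy ▸ Finset.mem_sdiff.2 ⟨hpy, hpA⟩)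
            intro y hy p hp
            obtain ⟨g1, g2⟩ := hgen y hy p hp
            obtain ⟨g1', g2'⟩ := hgen y₀ hy₀ p hp
            by_cases hpK : p ∈ K
            · rw [g1 hpK, g1' hpK]
            · rw [g2 hpK, g2' hpK]
          have hsub : F ⊆ univ.filter fun y => ∀ p ∉ D ∪ Bm, y p = y₀ p := by
            intro y hy
            rw [mem_filter]
            exact ⟨mem_univ _, hprop y hy⟩
          have hdisj : Disjoint D Bm := by
            refine Finset.disjoint_left.2 fun p hp hp' => ?_
            have : p ∈ A := hKA (hDK hp)
            have : p ∉ A := Finset.mem_compl.1 (hBmA hp')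
            tauto
          have hcard : (D ∪ Bm).card = l + j - k := by
            rw [Finset.card_union_of_disjoint hdisj, hDc, hBmc]
            omega
          calc F.card ≤ (univ.filter fun y => ∀ p ∉ D ∪ Bm, y p = y₀ p).card :=
                Finset.card_le_card hsub
            _ ≤ (D ∪ Bm).card.factorial := card_agree_le _ _
            _ = Nat.factorial (l + j - k) := by rw [hcard]
      calc ∑ D ∈ Finset.powersetCard l K,
            ((W.filter fun y => ((A ∩ msupp y).filter fun p => x p ≠ y p) = D)).card
          ≤ ∑ D ∈ Finset.powersetCard l K, Nat.factorial (l + j - k) :=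
            Finset.sum_le_sum step3
        _ = Nat.choose k l * Nat.factorial (l + j - k) := by
            rw [Finset.sum_const, Finset.card_powersetCard, hKc, smul_eq_mul]
    calc ∑ Bm ∈ Finset.powersetCard (j - k) Aᶜ,
          ((Z.filter fun y => msupp y \ A = Bm)).card
        ≤ ∑ Bm ∈ Finset.powersetCard (j - k) Aᶜ,
            (Nat.choose k l * Nat.factorial (l + j - k)) := Finset.sum_le_sum step2
      _ = Nat.choose (n - i) (j - k) * (Nat.choose k l * Nat.factorial (l + j - k)) := by
          rw [Finset.sum_const, Finset.card_powersetCard, Finset.card_compl,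
            Fintype.card_fin, hA, smul_eq_mul]
  calc ∑ K ∈ Finset.powersetCard k A, (Ykl.filter fun y => A ∩ msupp y = K).card
      ≤ ∑ K ∈ Finset.powersetCard k A,
          (Nat.choose (n - i) (j - k) * (Nat.choose k l * Nat.factorial (l + j - k))) :=
        Finset.sum_le_sum step
    _ = Nat.choose i k * Nat.choose (n - i) (j - k) * Nat.choose k l *
          Nat.factorial (l + j - k) := by
        rw [Finset.sum_const, Finset.card_powersetCard, hA, smul_eq_mul]
        ring

end Helpers

theorem stmt4 (n d : ℕ) (hn : 0 < n) (hd : 0 < d) (hdn : d ≤ n) :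
    (Tperm n d : ℝ) ≤
      (1 / 2) * ∑ i ∈ Finset.Icc 2 (d - 1), ∑ j ∈ Finset.Icc 2 (d - 1),
        (Nat.choose n i : ℝ) * (numDerangements i : ℝ) * (L n d i j : ℝ) := by
  classical
  have hwt2 : ∀ y : Equiv.Perm (Fin n), permWt y ≠ 1 := by
    intro y h
    obtain ⟨a, ha⟩ := Finset.card_eq_one.1 h
    have haa : a ∈ (Finset.univ.filter fun p => y p ≠ p) := by
      rw [ha]; exact Finset.mem_singleton_self a
    have hya : y a ≠ a := (Finset.mem_filter.1 haa).2
    have : y a ∈ (Finset.univ.filter fun p => y p ≠ p) := by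
      rw [mem_filter]
      refine ⟨mem_univ _, fun hcon => ?_⟩
      exact hya (y.injective hcon)
    rw [ha, Finset.mem_singleton] at this
    exact hya this
  set P := ((Finset.univ : Finset (Equiv.Perm (Fin n) × Equiv.Perm (Fin n))).filter
    (fun p => p.1 ≠ p.2 ∧ 1 ≤ permWt p.1 ∧ permWt p.1 ≤ d - 1 ∧
      1 ≤ permWt p.2 ∧ permWt p.2 ≤ d - 1 ∧ permDist p.1 p.2 ≤ d - 1)) with hP
  have hmem : ∀ p ∈ P, (permWt p.1, permWt p.2) ∈
      Finset.Icc 2 (d - 1) ×ˢ Finset.Icc 2 (d - 1) := by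
    intro p hp
    rw [hP, mem_filter] at hp
    obtain ⟨_, _, h1, h2, h3, h4, _⟩ := hp
    have e1 := hwt2 p.1
    have e2 := hwt2 p.2
    rw [Finset.mem_product, mem_Icc, mem_Icc]
    omega
  have key : P.card ≤ ∑ i ∈ Finset.Icc 2 (d - 1), ∑ j ∈ Finset.Icc 2 (d - 1),
      Nat.choose n i * numDerangements i * L n d i j := by
    rw [Finset.card_eq_sum_card_fiberwise hmem, Finset.sum_product]
    refine Finset.sum_le_sum fun i _ => Finset.sum_le_sum fun j _ => ?_
    set Q := P.filter fun p => (permWt p.1, permWt p.2) = (i, j) with hQ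
    have hm2 : ∀ p ∈ Q, p.1 ∈ Finset.univ.filter fun x : Equiv.Perm (Fin n) =>
        permWt x = i := by
      intro p hp
      rw [hQ, mem_filter, Prod.mk.injEq] at hp
      rw [mem_filter]
      exact ⟨mem_univ _, hp.2.1⟩
    rw [Finset.card_eq_sum_card_fiberwise hm2]
    calc ∑ x ∈ Finset.univ.filter (fun x : Equiv.Perm (Fin n) => permWt x = i),
          (Q.filter fun p => p.1 = x).card
        ≤ ∑ x ∈ Finset.univ.filter (fun x : Equiv.Perm (Fin n) => permWt x = i),
            L n d i j := by
          refine Finset.sum_le_sum fun x hx => ?_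
          have hxi : permWt x = i := (Finset.mem_filter.1 hx).2
          calc (Q.filter fun p => p.1 = x).card
              ≤ (Finset.univ.filter fun y : Equiv.Perm (Fin n) =>
                  permWt y = j ∧ permDist x y ≤ d - 1).card := by
                apply Finset.card_le_card_of_injOn (fun p => p.2)
                · intro p hp
                  rw [Finset.mem_coe, Finset.mem_filter, hQ, Finset.mem_filter, hP,
                    Finset.mem_filter, Prod.mk.injEq] at hp
                  obtain ⟨⟨⟨_, _, _, _, _, _, hdist⟩, _, hj⟩, hx1⟩ := hp
                  exact Finset.mem_coe.2 (Finset.mem_filter.2 ⟨mem_univ _, hj, hx1 ▸ hdist⟩)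
                · intro p hp q hq hpq
                  rw [Finset.mem_coe, Finset.mem_filter] at hp hq
                  exact Prod.ext (hp.2.trans hq.2.symm) hpq
            _ ≤ L n d i j := card_close_le d i j hd x hxi
      _ = (Finset.univ.filter (fun x : Equiv.Perm (Fin n) => permWt x = i)).card *
            L n d i j := by rw [Finset.sum_const, smul_eq_mul]
      _ ≤ Nat.choose n i * numDerangements i * L n d i j :=
          Nat.mul_le_mul_right _ (card_wt_le i)
  have hT : Tperm n d = P.card / 2 := rfl
  rw [hT]
  have h1 : ((P.card / 2 : ℕ) : ℝ) ≤ (P.card : ℝ) / 2 := by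
    exact_mod_cast Nat.cast_div_le
  refine le_trans h1 ?_
  rw [div_eq_mul_inv, mul_comm, ← one_div]
  apply mul_le_mul_of_nonneg_left _ (by norm_num : (0:ℝ) ≤ 1/2)
  calc (P.card : ℝ) ≤ ((∑ i ∈ Finset.Icc 2 (d - 1), ∑ j ∈ Finset.Icc 2 (d - 1),
        Nat.choose n i * numDerangements i * L n d i j : ℕ) : ℝ) := by exact_mod_cast key
    _ = ∑ i ∈ Finset.Icc 2 (d - 1), ∑ j ∈ Finset.Icc 2 (d - 1),
        (Nat.choose n i : ℝ) * (numDerangements i : ℝ) * (L n d i j : ℝ) := by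
      push_cast; ring
end

section
/- Let n and d be positive integers with d ≤ n. Then T ≤ (T′ + D′)·D_{d−1}², where D′ = V₂(n,d−1) − 1. -/
open Finset

/-! ### Auxiliary lemmas -/

lemma numDer_step (k : ℕ) : numDerangements (k+1) ≤ numDerangements (k+2) := by
  rw [numDerangements_add_two]
  nlinarith [numDerangements k]

lemma numDer_mono {a b : ℕ} (ha : 1 ≤ a) (hab : a ≤ b) :
    numDerangements a ≤ numDerangements b := by
  induction b, hab using Nat.le_induction with
  | base => exact le_refl _
  | succ b hb ih =>
    refine ih.trans ?_
    obtain ⟨c, rfl⟩ := Nat.exists_eq_add_of_le (ha.trans hb)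
    rw [Nat.add_comm 1 c]; exact numDer_step c

lemma binWt_eq_true {n : ℕ} (u : Fin n → Bool) :
    binWt u = (Finset.univ.filter fun i => u i = true).card := by
  simp [binWt, ne_eq, Bool.not_eq_false]

lemma supp_iff {n : ℕ} {x : Equiv.Perm (Fin n)} {u : Fin n → Bool}
    (hx : (fun i => decide (x i ≠ i)) = u) : ∀ i, u i = true ↔ x i ≠ i := by
  intro i; rw [← congrFun hx i]; exact ⟨of_decide_eq_true, decide_eq_true⟩

lemma supp_perm_iff {n : ℕ} {x : Equiv.Perm (Fin n)} {u : Fin n → Bool}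
    (hx : (fun i => decide (x i ≠ i)) = u) :
    ∀ i : Fin n, u i = true ↔ u (x i) = true := by
  have hs := supp_iff hx
  intro i
  constructor
  · intro hi
    exact (hs (x i)).mpr (x.injective.ne ((hs i).mp hi))
  · intro hi
    have h2 := (hs (x i)).mp hi
    apply (hs i).mpr
    intro h
    apply h2
    rw [h]
    exact h

lemma fiber_card_le {n : ℕ} (u : Fin n → Bool) :
    ((univ : Finset (Equiv.Perm (Fin n))).filter
      (fun x => (fun i => decide (x i ≠ i)) = u)).card ≤ numDerangements (binWt u) := by
  classical
  have hcard : Fintype.card {i : Fin n // u i = true} = binWt u := by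
    rw [binWt_eq_true, Fintype.card_subtype]
  have hder : ((univ : Finset (Equiv.Perm {i : Fin n // u i = true})).filter
      (fun σ => ∀ x, σ x ≠ x)).card = numDerangements (binWt u) := by
    rw [← hcard, ← card_derangements_eq_numDerangements]
    rw [← Fintype.card_subtype]
    exact Fintype.card_congr (Equiv.subtypeEquivRight (fun σ => by
      simp [derangements, Set.mem_setOf_eq]))
  rw [← hder]
  set g : Equiv.Perm (Fin n) → Equiv.Perm {i : Fin n // u i = true} :=
    fun x => if h : ∀ i : Fin n, u i = true ↔ u (x i) = true
      then x.subtypePerm (fun i => (h i).symm) else 1 with hg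
  apply Finset.card_le_card_of_injOn g
  · intro x hx
    simp only [mem_coe, mem_filter, mem_univ, true_and] at hx
    have hiff := supp_perm_iff hx
    simp only [mem_coe, mem_filter, mem_univ, true_and, hg, dif_pos hiff]
    intro a
    have : x a.1 ≠ a.1 := (supp_iff hx a.1).mp a.2
    simp [Equiv.Perm.subtypePerm, Subtype.ext_iff, this]
  · intro x hx y hy hxy
    simp only [mem_coe, mem_filter, mem_univ, true_and] at hx hy
    have hix := supp_perm_iff hx
    have hiy := supp_perm_iff hy
    simp only [hg, dif_pos hix, dif_pos hiy] at hxy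
    refine Equiv.ext fun i => ?_
    by_cases hi : u i = true
    · have h3 : (x.subtypePerm (fun i => (hix i).symm)) (⟨i, hi⟩ : {i : Fin n // u i = true}) = (y.subtypePerm (fun i => (hiy i).symm)) (⟨i, hi⟩ : {i : Fin n // u i = true}) := by rw [hxy]
      simpa [Equiv.Perm.subtypePerm_apply, Subtype.ext_iff] using h3
    · have h1 : x i = i := by
        by_contra h; exact hi ((supp_iff hx i).mpr h)
      have h2 : y i = i := by
        by_contra h; exact hi ((supp_iff hy i).mpr h)
      rw [h1, h2]

lemma card_binWt_eq {n : ℕ} (i : ℕ) :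
    ((univ : Finset (Fin n → Bool)).filter (fun u => binWt u = i)).card = Nat.choose n i := by
  classical
  have hpc : ((univ : Finset (Fin n)).powersetCard i).card = n.choose i := by
    simp [Finset.card_powersetCard]
  rw [← hpc]
  refine Finset.card_nbij' (fun u => univ.filter (fun j => u j = true))
    (fun s => fun j => decide (j ∈ s)) ?_ ?_ ?_ ?_
  · intro u hu
    simp only [mem_coe, mem_filter, mem_univ, true_and] at hu
    simp [Finset.mem_powersetCard, ← binWt_eq_true, hu]
  · intro s hs
    simp only [mem_coe, Finset.mem_powersetCard] at hs
    simp only [mem_coe, mem_filter, mem_univ, true_and, binWt_eq_true]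
    rw [← hs.2]
    congr 1
    ext j
    simp
  · intro u hu
    funext j
    simp
  · intro s hs
    ext j
    simp

lemma card_wt_le_eq {n r : ℕ} :
    ((univ : Finset (Fin n → Bool)).filter (fun u => binWt u ≤ r)).card = V2 n r := by
  classical
  rw [Finset.card_eq_sum_card_fiberwise (f := binWt) (t := Finset.range (r+1))
    (fun u hu => by simp only [mem_coe, mem_filter] at hu; simp [Nat.lt_succ_iff, hu.2])]
  rw [V2]
  apply Finset.sum_congr rfl
  intro i hi
  rw [← card_binWt_eq (n := n) i]
  congr 1
  rw [Finset.filter_filter]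
  apply Finset.filter_congr
  intro u _
  simp only [Finset.mem_range, Nat.lt_succ_iff] at hi
  constructor
  · exact fun h => h.2
  · exact fun h => ⟨h ▸ hi, h⟩

lemma even_card_sym {β : Type*} [Fintype β] [DecidableEq β] (C : Finset (β × β))
    (hsym : ∀ p ∈ C, Prod.swap p ∈ C) (hne : ∀ p ∈ C, p.1 ≠ p.2) : Even C.card := by
  classical
  let e := Fintype.equivFin β
  have key : (C.filter (fun p => e p.1 < e p.2)).card
      = (C.filter (fun p => ¬ e p.1 < e p.2)).card := by
    apply Finset.card_bij (fun p _ => Prod.swap p)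
    · intro p hp
      simp only [mem_filter] at hp ⊢
      exact ⟨hsym p hp.1, by simp [lt_asymm hp.2]⟩
    · intro p hp q hq hpq
      exact Prod.swap_injective hpq
    · intro q hq
      simp only [mem_filter] at hq
      refine ⟨Prod.swap q, ?_, by simp⟩
      simp only [mem_filter]
      refine ⟨hsym q hq.1, ?_⟩
      have hne' : e q.1 ≠ e q.2 := fun h => hne q hq.1 (e.injective h)
      have := hq.2
      simp only [Prod.fst_swap, Prod.snd_swap]
      omega
  have hsum : (C.filter (fun p => e p.1 < e p.2)).card
      + (C.filter (fun p => ¬ e p.1 < e p.2)).card = C.card :=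
    Finset.card_filter_add_card_filter_not (s := C) (p := fun p => e p.1 < e p.2)
  exact ⟨(C.filter (fun p => e p.1 < e p.2)).card, by omega⟩

lemma permDist_comm {n : ℕ} (x y : Equiv.Perm (Fin n)) : permDist x y = permDist y x := by
  unfold permDist
  congr 1
  apply Finset.filter_congr
  intro i _
  exact ne_comm

lemma binDist_comm {n : ℕ} (u v : Fin n → Bool) : binDist u v = binDist v u := by
  unfold binDist
  congr 1
  apply Finset.filter_congr
  intro i _
  exact ne_comm

theorem stmt5 (n d : ℕ) (hn : 0 < n) (hd : 0 < d) (hdn : d ≤ n) :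
    Tperm n d ≤ (Tbin n d + (V2 n (d - 1) - 1)) * numDerangements (d - 1) ^ 2 := by
  set r := d - 1 with hr
  set D := numDerangements r with hD
  set f : Equiv.Perm (Fin n) → (Fin n → Bool) := fun x i => decide (x i ≠ i) with hf
  set F : Equiv.Perm (Fin n) × Equiv.Perm (Fin n) → (Fin n → Bool) × (Fin n → Bool) :=
    fun p => (f p.1, f p.2) with hF
  set A := ((Finset.univ : Finset (Equiv.Perm (Fin n) × Equiv.Perm (Fin n))).filter
    (fun p => p.1 ≠ p.2 ∧ 1 ≤ permWt p.1 ∧ permWt p.1 ≤ r ∧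
      1 ≤ permWt p.2 ∧ permWt p.2 ≤ r ∧ permDist p.1 p.2 ≤ r)) with hA
  set B := ((Finset.univ : Finset ((Fin n → Bool) × (Fin n → Bool))).filter
    (fun p => p.1 ≠ p.2 ∧ p.1 ≠ (fun _ => false) ∧ p.2 ≠ (fun _ => false) ∧
      binWt p.1 ≤ r ∧ binWt p.2 ≤ r ∧ binDist p.1 p.2 ≤ r)) with hB
  have hT : Tperm n d = A.card / 2 := rfl
  have hTb : Tbin n d = B.card / 2 := rfl
  -- basic facts about f
  have hwt : ∀ x : Equiv.Perm (Fin n), binWt (f x) = permWt x := by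
    intro x
    simp [binWt, permWt, hf]
  have hdist : ∀ x y : Equiv.Perm (Fin n), binDist (f x) (f y) ≤ permDist x y := by
    intro x y
    unfold binDist permDist
    apply Finset.card_le_card
    intro i hi
    simp only [mem_filter, mem_univ, true_and, hf] at hi ⊢
    exact fun h => hi (by rw [h])
  have hzero : ∀ x : Equiv.Perm (Fin n), 1 ≤ permWt x → f x ≠ (fun _ => false) := by
    intro x h hc
    rw [← hwt x, hc] at h
    simp [binWt] at h
  -- the two parts of A
  set A2 := A.filter (fun p => f p.1 = f p.2) with hA2def
  set A1 := A.filter (fun p => ¬ f p.1 = f p.2) with hA1def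
  have hsplit : A2.card + A1.card = A.card :=
    Finset.card_filter_add_card_filter_not (s := A) (p := fun p => f p.1 = f p.2)
  -- fiber bound
  have hcoord : ∀ x₀ : Equiv.Perm (Fin n), 1 ≤ permWt x₀ → permWt x₀ ≤ r →
      ((univ : Finset (Equiv.Perm (Fin n))).filter (fun x => f x = f x₀)).card ≤ D := by
    intro x₀ h1 h2
    calc ((univ : Finset (Equiv.Perm (Fin n))).filter (fun x => f x = f x₀)).card
        ≤ numDerangements (binWt (f x₀)) := fiber_card_le (f x₀)
      _ ≤ D := by
          rw [hwt x₀]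
          exact numDer_mono h1 h2
  have hfib : ∀ S : Finset (Equiv.Perm (Fin n) × Equiv.Perm (Fin n)), S ⊆ A →
      ∀ q ∈ S.image F, (S.filter (fun p => F p = q)).card ≤ D ^ 2 := by
    intro S hS q hq
    obtain ⟨p₀, hp₀, rfl⟩ := Finset.mem_image.mp hq
    have hp₀A := hS hp₀
    rw [hA, mem_filter] at hp₀A
    obtain ⟨-, -, h11, h12, h21, h22, -⟩ := hp₀A
    have hsub : (S.filter (fun p => F p = F p₀)) ⊆
        ((univ : Finset (Equiv.Perm (Fin n))).filter (fun x => f x = f p₀.1)) ×ˢ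
        ((univ : Finset (Equiv.Perm (Fin n))).filter (fun x => f x = f p₀.2)) := by
      intro p hp
      simp only [mem_filter, Finset.mem_product, mem_univ, true_and] at hp ⊢
      exact ⟨congrArg Prod.fst hp.2, congrArg Prod.snd hp.2⟩
    calc (S.filter (fun p => F p = F p₀)).card
        ≤ _ := Finset.card_le_card hsub
      _ = _ * _ := Finset.card_product _ _
      _ ≤ D * D := Nat.mul_le_mul (hcoord p₀.1 h11 h12) (hcoord p₀.2 h21 h22)
      _ = D ^ 2 := (sq D).symm
  -- bound for A2
  have hA2card : A2.card ≤ D ^ 2 * (A2.image F).card :=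
    Finset.card_le_mul_card_image _ _ (hfib A2 (Finset.filter_subset _ _))
  have himg2 : (A2.image F).card ≤ V2 n r - 1 := by
    have hdiag : ∀ z ∈ A2.image F, z.2 = z.1 := by
      intro z hz
      obtain ⟨p, hp, rfl⟩ := Finset.mem_image.mp hz
      exact ((mem_filter.mp hp).2).symm
    have hinj : Set.InjOn (Prod.fst : (Fin n → Bool) × (Fin n → Bool) → (Fin n → Bool)) ((A2.image F : Finset _) : Set ((Fin n → Bool) × (Fin n → Bool))) := by
      intro q hq q' hq' h
      exact Prod.ext h (by
        rw [hdiag q (Finset.mem_coe.mp hq), hdiag q' (Finset.mem_coe.mp hq'), h])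
    have heq : ((A2.image F).image Prod.fst).card = (A2.image F).card :=
      Finset.card_image_of_injOn hinj
    rw [← heq]
    have hsub : (A2.image F).image Prod.fst ⊆
        (univ : Finset (Fin n → Bool)).filter
          (fun u => u ≠ (fun _ => false) ∧ binWt u ≤ r) := by
      intro u hu
      obtain ⟨q, hq, rfl⟩ := Finset.mem_image.mp hu
      obtain ⟨p, hp, rfl⟩ := Finset.mem_image.mp hq
      have hpA := (Finset.filter_subset _ A) hp
      rw [hA, mem_filter] at hpA
      obtain ⟨-, -, h11, h12, -, -, -⟩ := hpA
      simp only [mem_filter, mem_univ, true_and]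
      exact ⟨hzero p.1 h11, by rw [hwt p.1]; exact h12⟩
    have h0 : (fun _ => false : Fin n → Bool) ∈
        (univ : Finset (Fin n → Bool)).filter (fun u => binWt u ≤ r) := by
      simp [binWt]
    have hsub2 : (univ : Finset (Fin n → Bool)).filter
          (fun u => u ≠ (fun _ => false) ∧ binWt u ≤ r) ⊆
        ((univ : Finset (Fin n → Bool)).filter (fun u => binWt u ≤ r)).erase
          (fun _ => false) := by
      intro u hu
      simp only [mem_filter, mem_univ, true_and, Finset.mem_erase] at hu ⊢
      exact ⟨hu.1, hu.2⟩
    calc ((A2.image F).image Prod.fst).card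
        ≤ _ := Finset.card_le_card (hsub.trans hsub2)
      _ = ((univ : Finset (Fin n → Bool)).filter (fun u => binWt u ≤ r)).card - 1 :=
          Finset.card_erase_of_mem h0
      _ = V2 n r - 1 := by rw [card_wt_le_eq]
  -- bound for A1
  have hA1card : A1.card ≤ D ^ 2 * (A1.image F).card :=
    Finset.card_le_mul_card_image _ _ (hfib A1 (Finset.filter_subset _ _))
  have hAsym : ∀ p ∈ A, Prod.swap p ∈ A := by
    intro p hp
    rw [hA, mem_filter] at hp ⊢
    obtain ⟨-, h0, h11, h12, h21, h22, hdd⟩ := hp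
    exact ⟨mem_univ _, h0.symm, h21, h22, h11, h12, by
      rw [Prod.fst_swap, Prod.snd_swap, permDist_comm]; exact hdd⟩
  have hA1sym : ∀ p ∈ A1, Prod.swap p ∈ A1 := by
    intro p hp
    rw [hA1def, mem_filter] at hp ⊢
    exact ⟨hAsym p hp.1, fun h => hp.2 h.symm⟩
  have himg1sym : ∀ q ∈ A1.image F, Prod.swap q ∈ A1.image F := by
    intro q hq
    obtain ⟨p, hp, rfl⟩ := Finset.mem_image.mp hq
    exact Finset.mem_image.mpr ⟨Prod.swap p, hA1sym p hp, rfl⟩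
  have himg1ne : ∀ q ∈ A1.image F, q.1 ≠ q.2 := by
    intro q hq
    obtain ⟨p, hp, rfl⟩ := Finset.mem_image.mp hq
    exact (mem_filter.mp hp).2
  have heven : Even (A1.image F).card := even_card_sym _ himg1sym himg1ne
  have hBeven : Even B.card := by
    apply even_card_sym
    · intro p hp
      rw [hB, mem_filter] at hp ⊢
      obtain ⟨-, h0, h1, h2, h3, h4, h5⟩ := hp
      exact ⟨mem_univ _, h0.symm, h2, h1, h4, h3, by
        rw [Prod.fst_swap, Prod.snd_swap, binDist_comm]; exact h5⟩
    · intro p hp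
      rw [hB, mem_filter] at hp
      exact hp.2.1
  have himg1subB : A1.image F ⊆ B := by
    intro q hq
    obtain ⟨p, hp, rfl⟩ := Finset.mem_image.mp hq
    have hne := (mem_filter.mp hp).2
    have hpA := (Finset.filter_subset _ A) hp
    rw [hA, mem_filter] at hpA
    obtain ⟨-, -, h11, h12, h21, h22, hdd⟩ := hpA
    rw [hB, mem_filter]
    refine ⟨mem_univ _, hne, hzero p.1 h11, hzero p.2 h21, ?_, ?_, ?_⟩
    · rw [hwt p.1]; exact h12
    · rw [hwt p.2]; exact h22
    · exact le_trans (hdist p.1 p.2) hdd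
  have himg1 : (A1.image F).card ≤ 2 * Tbin n d := by
    have h1 : (A1.image F).card ≤ B.card := Finset.card_le_card himg1subB
    obtain ⟨k, hk⟩ := heven
    obtain ⟨m, hm⟩ := hBeven
    omega
  -- put it together
  have hfinal : A.card ≤ 2 * ((Tbin n d + (V2 n r - 1)) * D ^ 2) := by
    have h2 : A2.card ≤ D ^ 2 * (V2 n r - 1) :=
      hA2card.trans (Nat.mul_le_mul_left _ himg2)
    have h1 : A1.card ≤ D ^ 2 * (2 * Tbin n d) :=
      hA1card.trans (Nat.mul_le_mul_left _ himg1)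
    nlinarith [hsplit, h1, h2]
  rw [hT]
  omega
end

section
/- Let α be a constant with 0 < α < 1. Then there exists a positive constant ε such that for all positive integers n and d with (d : ℝ) = n^α, one has T′ ≤ (D′)^{2−ε}, where D′ = V₂(n,d−1) − 1. -/
open Finset

lemma card_small_powerset (n m : ℕ) :
    ((Finset.univ.powerset.filter (fun S : Finset (Fin n) => S.card ≤ m)).card = V2 n m) := by
  rw [Finset.card_eq_sum_card_fiberwise (f := fun S : Finset (Fin n) => S.card)
    (t := Finset.range (m+1)) (fun S hS => by
      simp only [Finset.mem_coe, mem_filter] at hS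
      exact Finset.mem_range.2 (Nat.lt_succ_of_le hS.2))]
  unfold V2
  apply Finset.sum_congr rfl
  intro s hs
  rw [Finset.filter_filter]
  have : (Finset.univ.powerset.filter fun S : Finset (Fin n) => S.card ≤ m ∧ S.card = s)
      = Finset.univ.powerset.filter fun S : Finset (Fin n) => S.card = s := by
    apply Finset.filter_congr
    intro S _
    constructor
    · exact fun h => h.2
    · exact fun h => ⟨h ▸ Nat.lt_succ_iff.1 (Finset.mem_range.1 hs), h⟩
  rw [this, ← Finset.powersetCard_eq_filter, Finset.card_powersetCard, Finset.card_univ,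
    Fintype.card_fin]

lemma two_mul_supp {n : ℕ} (u v : Fin n → Bool) :
    2 * (Finset.univ.filter fun i => u i ≠ false ∨ v i ≠ false).card
      = binWt u + binWt v + binDist u v := by
  unfold binWt binDist
  simp only [Finset.card_filter]
  rw [Finset.mul_sum, ← Finset.sum_add_distrib, ← Finset.sum_add_distrib]
  apply Finset.sum_congr rfl
  intro i _
  cases h1 : u i <;> cases h2 : v i <;> simp [h1, h2]

lemma card_le_of_supp_small {n m : ℕ} (P : Finset ((Fin n → Bool) × (Fin n → Bool)))
    (hP : ∀ p ∈ P, (Finset.univ.filter fun i => p.1 i ≠ false ∨ p.2 i ≠ false).card ≤ m) :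
    P.card ≤ V2 n m * 4 ^ m := by
  rw [Finset.card_eq_sum_card_fiberwise
    (f := fun p : (Fin n → Bool) × (Fin n → Bool) =>
      Finset.univ.filter fun i => p.1 i ≠ false ∨ p.2 i ≠ false)
    (t := Finset.univ.powerset.filter (fun S : Finset (Fin n) => S.card ≤ m))
    (fun p hp => Finset.mem_filter.2 ⟨Finset.mem_powerset.2 (Finset.subset_univ _), hP p hp⟩)]
  calc _ ≤ ∑ _S ∈ Finset.univ.powerset.filter (fun S : Finset (Fin n) => S.card ≤ m), 4 ^ m := by
        apply Finset.sum_le_sum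
        intro S hS
        have hSm : S.card ≤ m := (Finset.mem_filter.1 hS).2
        have : (P.filter (fun p => (Finset.univ.filter
            fun i => p.1 i ≠ false ∨ p.2 i ≠ false) = S)).card
            ≤ Fintype.card (S → Bool × Bool) := by
          rw [← Finset.card_univ]
          apply Finset.card_le_card_of_injOn (fun p => fun i : S => (p.1 i.1, p.2 i.1))
            (fun _ _ => Finset.mem_univ _)
          intro p hp q hq h
          simp only [Finset.mem_coe, Finset.mem_filter] at hp hq
          have key : ∀ i : Fin n, p.1 i = q.1 i ∧ p.2 i = q.2 i := by
            intro i
            by_cases hi : i ∈ S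
            · have := congrFun h ⟨i, hi⟩
              exact ⟨congrArg Prod.fst this, congrArg Prod.snd this⟩
            · have hp' : ¬ (p.1 i ≠ false ∨ p.2 i ≠ false) := by
                rw [← hp.2] at hi; intro hc; exact hi (Finset.mem_filter.2 ⟨Finset.mem_univ _, hc⟩)
              have hq' : ¬ (q.1 i ≠ false ∨ q.2 i ≠ false) := by
                rw [← hq.2] at hi; intro hc; exact hi (Finset.mem_filter.2 ⟨Finset.mem_univ _, hc⟩)
              push_neg at hp' hq'
              rw [hp'.1, hp'.2, hq'.1, hq'.2]; exact ⟨rfl, rfl⟩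
          exact Prod.ext (funext fun i => (key i).1) (funext fun i => (key i).2)
        refine this.trans ?_
        rw [Fintype.card_fun, Fintype.card_coe]
        calc (Fintype.card (Bool × Bool)) ^ S.card ≤ 4 ^ S.card := by norm_num
          _ ≤ 4 ^ m := Nat.pow_le_pow_right (by norm_num) hSm
    _ = V2 n m * 4 ^ m := by rw [Finset.sum_const, card_small_powerset, smul_eq_mul]

lemma card_Bset (n D : ℕ) :
    (Finset.univ.filter fun u : Fin n → Bool =>
      u ≠ (fun _ => false) ∧ binWt u ≤ D).card ≤ V2 n D - 1 := by
  have h0 : (∅ : Finset (Fin n)) ∈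
      Finset.univ.powerset.filter (fun S : Finset (Fin n) => S.card ≤ D) :=
    Finset.mem_filter.2 ⟨Finset.mem_powerset.2 (Finset.empty_subset _), by simp⟩
  have := Finset.card_erase_of_mem h0
  rw [card_small_powerset] at this
  rw [← this]
  apply Finset.card_le_card_of_injOn (fun u => Finset.univ.filter fun i => u i ≠ false)
  · intro u hu
    simp only [Finset.mem_coe, Finset.mem_filter, Finset.mem_univ, true_and] at hu
    apply Finset.mem_erase.2
    constructor
    · intro hc
      beta_reduce at hc
      apply hu.1
      funext i
      by_contra hne
      have : i ∈ Finset.univ.filter fun j => u j ≠ false :=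
        Finset.mem_filter.2 ⟨Finset.mem_univ _, hne⟩
      rw [hc] at this
      exact absurd this (Finset.notMem_empty i)
    · exact Finset.mem_filter.2 ⟨Finset.mem_powerset.2 (Finset.subset_univ _), hu.2⟩
  · intro u _ v _ h
    funext i
    by_cases hi : u i = false
    · by_cases hj : v i = false
      · rw [hi, hj]
      · exfalso
        have : i ∈ Finset.univ.filter fun j => v j ≠ false :=
          Finset.mem_filter.2 ⟨Finset.mem_univ _, hj⟩
        have h' : Finset.univ.filter (fun j => u j ≠ false) = Finset.univ.filter (fun j => v j ≠ false) := h
        rw [← h'] at this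
        exact (Finset.mem_filter.1 this).2 hi
    · by_cases hj : v i = false
      · exfalso
        have : i ∈ Finset.univ.filter fun j => u j ≠ false :=
          Finset.mem_filter.2 ⟨Finset.mem_univ _, hi⟩
        have h' : Finset.univ.filter (fun j => u j ≠ false) = Finset.univ.filter (fun j => v j ≠ false) := h
        rw [h'] at this
        exact (Finset.mem_filter.1 this).2 hj
      · rw [Bool.not_eq_false] at hi hj; rw [hi, hj]

/-- `(n/k)^k ≤ C(n,k)` over the reals. -/

lemma pow_div_le_choose : ∀ (k n : ℕ), k ≤ n → ((n : ℝ) / k) ^ k ≤ n.choose k := by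
  intro k
  induction k with
  | zero => intro n _; simp
  | succ k ih =>
    intro n hkn
    obtain ⟨m, rfl⟩ : ∃ m, n = m + 1 := ⟨n - 1, by omega⟩
    have hkm : k ≤ m := by omega
    have key : ((m + 1 : ℕ) : ℝ) * (m.choose k) = ((m+1).choose (k+1)) * ((k+1 : ℕ) : ℝ) := by
      exact_mod_cast congrArg (Nat.cast : ℕ → ℝ) (Nat.add_one_mul_choose_eq m k)
    have hk1 : (0:ℝ) < (k:ℝ) + 1 := by positivity
    have hbase : ((m + 1 : ℕ) : ℝ) / ((k+1 : ℕ) : ℝ) ^ (k+1) ≤ _ := le_refl _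
    have hratio : (((m:ℕ) + 1 : ℝ) / ((k:ℝ) + 1)) ^ k ≤ (m.choose k : ℝ) := by
      rcases Nat.eq_zero_or_pos k with hk0 | hkpos
      · subst hk0; simp
      · have h1 : ((m:ℝ) + 1) / ((k:ℝ) + 1) ≤ (m:ℝ) / (k:ℝ) := by
          rw [div_le_div_iff₀ hk1 (by exact_mod_cast hkpos)]
          have : (k:ℝ) ≤ m := by exact_mod_cast hkm
          nlinarith
        calc (((m:ℝ) + 1) / ((k:ℝ) + 1)) ^ k ≤ ((m:ℝ) / (k:ℝ)) ^ k := by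
              apply pow_le_pow_left₀ (by positivity) h1
          _ ≤ (m.choose k : ℝ) := ih m hkm
    have hpos : (0:ℝ) ≤ ((m:ℝ) + 1) / ((k:ℝ) + 1) := by positivity
    calc (((m+1:ℕ):ℝ) / ((k+1:ℕ):ℝ)) ^ (k+1)
        = (((m:ℝ) + 1) / ((k:ℝ) + 1)) ^ k * (((m:ℝ) + 1) / ((k:ℝ) + 1)) := by
          push_cast; ring
      _ ≤ (m.choose k : ℝ) * (((m:ℝ) + 1) / ((k:ℝ) + 1)) := by
          apply mul_le_mul_of_nonneg_right hratio hpos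
      _ = ((m+1:ℕ):ℝ) * (m.choose k) / ((k:ℝ) + 1) := by push_cast; ring
      _ = ((m+1).choose (k+1) : ℝ) := by
          rw [key]; push_cast; field_simp

/-- `V₂(n,m) ≤ (n/m)^m e^m` for `1 ≤ m ≤ n`. -/

lemma V2_le_pow (n m : ℕ) (hm : 1 ≤ m) (hmn : m ≤ n) :
    (V2 n m : ℝ) ≤ ((n:ℝ)/m) ^ m * Real.exp m := by
  have hm0 : (0:ℝ) < m := by exact_mod_cast hm
  have hn0 : (0:ℝ) < n := by exact_mod_cast (hm.trans hmn)
  set b : ℝ := (n:ℝ)/m with hb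
  have hb1 : 1 ≤ b := by
    rw [hb, le_div_iff₀ hm0, one_mul]
    exact_mod_cast hmn
  have hb0 : 0 < b := lt_of_lt_of_le one_pos hb1
  have hx : b⁻¹ = (m:ℝ)/n := by rw [hb]; field_simp
  have expand : (1 + b⁻¹) ^ n = ∑ i ∈ Finset.range (n+1),
      b⁻¹ ^ i * 1 ^ (n - i) * Nat.choose n i := add_pow b⁻¹ 1 n ▸ by rw [add_comm]
  have step1 : (V2 n m : ℝ) ≤ b ^ m * (1 + b⁻¹) ^ n := by
    rw [expand, Finset.mul_sum]
    calc (V2 n m : ℝ) = ∑ i ∈ Finset.range (m+1), (Nat.choose n i : ℝ) := by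
          unfold V2; push_cast; ring
      _ ≤ ∑ i ∈ Finset.range (m+1), b ^ m * (b⁻¹ ^ i * 1 ^ (n-i) * Nat.choose n i) := by
          apply Finset.sum_le_sum
          intro i hi
          have him : i ≤ m := Nat.lt_succ_iff.1 (Finset.mem_range.1 hi)
          have h1 : (1:ℝ) ≤ b ^ m * b⁻¹ ^ i := by
            rw [inv_pow, ← div_eq_mul_inv, le_div_iff₀ (by positivity), one_mul]
            exact pow_le_pow_right₀ hb1 him
          calc (Nat.choose n i : ℝ) = 1 * (Nat.choose n i : ℝ) := (one_mul _).symm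
            _ ≤ (b ^ m * b⁻¹ ^ i) * (Nat.choose n i : ℝ) := by
                apply mul_le_mul_of_nonneg_right h1 (by positivity)
            _ = b ^ m * (b⁻¹ ^ i * 1 ^ (n-i) * Nat.choose n i) := by ring
      _ ≤ ∑ i ∈ Finset.range (n+1), b ^ m * (b⁻¹ ^ i * 1 ^ (n-i) * Nat.choose n i) := by
          apply Finset.sum_le_sum_of_subset_of_nonneg
          · exact Finset.range_subset_range.2 (by omega)
          · intro i _ _; positivity
  have step2 : (1 + b⁻¹) ^ n ≤ Real.exp m := by
    have h1 : 1 + b⁻¹ ≤ Real.exp b⁻¹ := by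
      have := Real.add_one_le_exp b⁻¹; linarith
    calc (1 + b⁻¹) ^ n ≤ Real.exp b⁻¹ ^ n := by
          apply pow_le_pow_left₀ (by positivity) h1
      _ = Real.exp (n * b⁻¹) := (Real.exp_nat_mul _ n).symm
      _ ≤ Real.exp m := by
          apply Real.exp_le_exp.2
          rw [hx]
          rw [mul_div_assoc']
          rw [div_le_iff₀ hn0]
          nlinarith [hm0, hn0]
  calc (V2 n m : ℝ) ≤ b ^ m * (1 + b⁻¹) ^ n := step1
    _ ≤ b ^ m * Real.exp m := by
        apply mul_le_mul_of_nonneg_left step2 (by positivity)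

lemma wt_eq_zero {n : ℕ} {u : Fin n → Bool} (h : binWt u = 0) : u = fun _ => false := by
  unfold binWt at h
  rw [Finset.card_eq_zero] at h
  funext i
  by_contra hne
  have : i ∈ Finset.univ.filter fun j => u j ≠ false :=
    Finset.mem_filter.2 ⟨Finset.mem_univ _, hne⟩
  rw [h] at this
  exact absurd this (Finset.notMem_empty i)

theorem stmt8 (α : ℝ) (hα1 : 0 < α) (hα2 : α < 1) :
    ∃ ε : ℝ, 0 < ε ∧ ∀ n d : ℕ, 0 < n → 0 < d → (d : ℝ) = (n : ℝ) ^ α →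
      (Tbin n d : ℝ) ≤ ((V2 n (d - 1) - 1 : ℕ) : ℝ) ^ (2 - ε) := by
  set e4 : ℝ := 4 * Real.exp 1 with he4
  have he4_1 : (4:ℝ) ≤ e4 := by
    have := Real.one_le_exp (le_refl 0 |>.trans zero_le_one)
    nlinarith [Real.exp_pos 1, Real.one_le_exp (zero_le_one)]
  have he4_pos : (0:ℝ) < e4 := by linarith
  have h1α : (0:ℝ) < 1 - α := by linarith
  set N : ℝ := e4 ^ (6 / (1 - α)) with hN
  have hN_pos : 0 < N := Real.rpow_pos_of_pos he4_pos _
  have hexp1 : (1:ℝ) ≤ 6 / (1 - α) := by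
    rw [le_div_iff₀ h1α]; linarith
  have hN4 : (4:ℝ) ≤ N := by
    calc (4:ℝ) ≤ e4 := he4_1
      _ = e4 ^ (1:ℝ) := (Real.rpow_one _).symm
      _ ≤ N := Real.rpow_le_rpow_of_exponent_le (by linarith) hexp1
  refine ⟨N⁻¹, by positivity, ?_⟩
  set ε : ℝ := N⁻¹ with hε
  have hε_pos : 0 < ε := by positivity
  have hε4 : ε ≤ 1/4 := by
    rw [hε, inv_eq_one_div]
    exact one_div_le_one_div_of_le (by norm_num) hN4
  have h2ε : (0:ℝ) ≤ 2 - ε := by linarith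
  intro n d hn hd hdα
  have hn1 : (1:ℝ) ≤ (n:ℝ) := by exact_mod_cast hn
  have hn0 : (0:ℝ) < (n:ℝ) := by linarith
  -- d ≤ n
  have hdn : d ≤ n := by
    have : (d:ℝ) ≤ (n:ℝ) := by
      rw [hdα]
      calc (n:ℝ) ^ α ≤ (n:ℝ) ^ (1:ℝ) := Real.rpow_le_rpow_of_exponent_le hn1 hα2.le
        _ = (n:ℝ) := Real.rpow_one _
    exact_mod_cast this
  rcases Nat.lt_or_ge d 2 with hd1 | hd2
  · -- d = 1 : Tbin = 0
    have hd1' : d = 1 := by omega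
    subst hd1'
    have hTbin : Tbin n 1 = 0 := by
      unfold Tbin
      have : ((Finset.univ : Finset ((Fin n → Bool) × (Fin n → Bool))).filter
          (fun p => p.1 ≠ p.2 ∧ p.1 ≠ (fun _ => false) ∧ p.2 ≠ (fun _ => false) ∧
            binWt p.1 ≤ 1 - 1 ∧ binWt p.2 ≤ 1 - 1 ∧ binDist p.1 p.2 ≤ 1 - 1)) = ∅ := by
        rw [Finset.filter_eq_empty_iff]
        intro p _
        intro hc
        exact hc.2.1 (wt_eq_zero (Nat.le_zero.1 hc.2.2.2.1))
      rw [this]; simp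
    rw [hTbin]
    push_cast
    exact Real.rpow_nonneg (Nat.cast_nonneg _) _
  · -- d ≥ 2
    set D : ℕ := d - 1 with hD
    have hD1 : 1 ≤ D := by omega
    have hDn : D ≤ n := by omega
    have hDd : (D:ℝ) ≤ (d:ℝ) := by exact_mod_cast Nat.sub_le d 1
    have hD0 : (0:ℝ) < (D:ℝ) := by exact_mod_cast hD1
    set D' : ℕ := V2 n D - 1 with hD'
    -- V2 n D ≥ 1 + max (choose n D) n
    have hsum : ∀ k, 1 ≤ k → k ≤ D → 1 + n.choose k ≤ V2 n D := by
      intro k hkpos hk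
      · have hsub : ({0, k} : Finset ℕ) ⊆ Finset.range (D + 1) := by
          intro x hx
          simp only [Finset.mem_insert, Finset.mem_singleton] at hx
          rcases hx with rfl | rfl <;> exact Finset.mem_range.2 (by omega)
        have := Finset.sum_le_sum_of_subset (f := fun i => n.choose i) hsub
        rw [Finset.sum_pair (by omega : (0:ℕ) ≠ k), Nat.choose_zero_right] at this; exact this
    have hD'choose : n.choose D ≤ D' := by
      have := hsum D hD1 (le_refl D); omega
    have hD'n : n ≤ D' := by
      have := hsum 1 (le_refl 1) hD1; rw [Nat.choose_one_right] at this; omega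
    have hD'pos : (0:ℝ) < (D':ℝ) := by
      have : 0 < D' := by omega
      exact_mod_cast this
    have hD'2n : D' ≤ 2 ^ n := by
      have : V2 n D ≤ 2 ^ n := by
        calc V2 n D ≤ ∑ i ∈ Finset.range (n+1), n.choose i :=
              Finset.sum_le_sum_of_subset (Finset.range_subset_range.2 (by omega))
          _ = 2 ^ n := Nat.sum_range_choose n
      omega
    -- the pair set
    set P := ((Finset.univ : Finset ((Fin n → Bool) × (Fin n → Bool))).filter
      (fun p => p.1 ≠ p.2 ∧ p.1 ≠ (fun _ => false) ∧ p.2 ≠ (fun _ => false) ∧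
        binWt p.1 ≤ d - 1 ∧ binWt p.2 ≤ d - 1 ∧ binDist p.1 p.2 ≤ d - 1)) with hP
    have hTbinP : Tbin n d = P.card / 2 := rfl
    rcases lt_or_ge (n:ℝ) N with hnN | hnN
    · -- small case : trivial bound
      have hPcard : P.card ≤ D' * D' := by
        have hsub : P ⊆ (Finset.univ.filter fun u : Fin n → Bool =>
            u ≠ (fun _ => false) ∧ binWt u ≤ D) ×ˢ
            (Finset.univ.filter fun u : Fin n → Bool =>
            u ≠ (fun _ => false) ∧ binWt u ≤ D) := by
          intro p hp
          obtain ⟨-, h1, h2, h3, h4, -⟩ := (Finset.mem_filter.1 hp).2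
          exact Finset.mem_product.2 ⟨Finset.mem_filter.2 ⟨Finset.mem_univ _, h1, h3⟩,
            Finset.mem_filter.2 ⟨Finset.mem_univ _, h2, h4⟩⟩
        calc P.card ≤ _ := Finset.card_le_card hsub
          _ = _ * _ := Finset.card_product _ _
          _ ≤ D' * D' := Nat.mul_le_mul (card_Bset n D) (card_Bset n D)
      have step1 : (Tbin n d : ℝ) ≤ (D':ℝ) * (D':ℝ) / 2 := by
        rw [hTbinP]
        calc ((P.card / 2 : ℕ) : ℝ) ≤ (P.card : ℝ) / 2 := Nat.cast_div_le
          _ ≤ (D':ℝ) * (D':ℝ) / 2 := by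
              have : (P.card : ℝ) ≤ (D':ℝ) * (D':ℝ) := by exact_mod_cast hPcard
              linarith
      have hDε : (D':ℝ) ^ ε ≤ 2 := by
        calc (D':ℝ) ^ ε ≤ ((2:ℝ) ^ (n:ℕ)) ^ ε := by
              apply Real.rpow_le_rpow hD'pos.le (by exact_mod_cast hD'2n) hε_pos.le
          _ = (2:ℝ) ^ ((n:ℝ) * ε) := by
              rw [← Real.rpow_natCast 2 n, ← Real.rpow_mul (by norm_num)]
          _ ≤ (2:ℝ) ^ (1:ℝ) := by
              apply Real.rpow_le_rpow_of_exponent_le (by norm_num)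
              rw [hε]
              calc (n:ℝ) * N⁻¹ ≤ N * N⁻¹ := by
                    apply mul_le_mul_of_nonneg_right hnN.le (by positivity)
                _ = 1 := mul_inv_cancel₀ (by positivity)
          _ = 2 := Real.rpow_one 2
      calc (Tbin n d : ℝ) ≤ (D':ℝ) * (D':ℝ) / 2 := step1
        _ ≤ (D':ℝ) ^ (2:ℝ) / (D':ℝ) ^ ε := by
            have h2 : (D':ℝ) ^ (2:ℝ) = (D':ℝ) * (D':ℝ) := by
              rw [show (2:ℝ) = ((2:ℕ):ℝ) by norm_num, Real.rpow_natCast]; ring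
            rw [h2]
            exact div_le_div_of_nonneg_left (by positivity) (Real.rpow_pos_of_pos hD'pos _) hDε
        _ = (D':ℝ) ^ ((2:ℝ) - ε) := by rw [← Real.rpow_sub hD'pos]
        _ = (D':ℝ) ^ (2 - ε) := by norm_num
    · -- main case
      have hnNα : e4 ^ (6:ℝ) ≤ (n:ℝ) ^ (1 - α) := by
        calc e4 ^ (6:ℝ) = (e4 ^ (6/(1-α))) ^ (1-α) := by
              rw [← Real.rpow_mul he4_pos.le, div_mul_cancel₀ _ (ne_of_gt h1α)]
          _ ≤ (n:ℝ) ^ (1-α) := Real.rpow_le_rpow hN_pos.le hnN h1α.le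
      have hnd : (n:ℝ) ^ (1 - α) = (n:ℝ) / d := by
        rw [Real.rpow_sub hn0, Real.rpow_one, hdα]
      set nD : ℝ := (n:ℝ) / (D:ℝ) with hnD
      have hbD : e4 ^ (6:ℝ) ≤ nD := by
        calc e4 ^ (6:ℝ) ≤ (n:ℝ) ^ (1-α) := hnNα
          _ = (n:ℝ) / d := hnd
          _ ≤ nD := by
              apply div_le_div_of_nonneg_left hn0.le hD0
              exact hDd
      have he4_6 : (1:ℝ) ≤ e4 ^ (6:ℝ) := by
        calc (1:ℝ) ≤ e4 := by linarith
          _ = e4 ^ (1:ℝ) := (Real.rpow_one _).symm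
          _ ≤ e4 ^ (6:ℝ) := Real.rpow_le_rpow_of_exponent_le (by linarith) (by norm_num)
      have hnD1 : (1:ℝ) ≤ nD := le_trans he4_6 hbD
      have hnD0 : (0:ℝ) < nD := by linarith
      set m : ℕ := 3 * D / 2 with hm
      have hm1 : 1 ≤ m := by omega
      have hDm : D ≤ m := by omega
      have hmr : (m:ℝ) ≤ 3 * (D:ℝ) / 2 := by
        calc (m:ℝ) ≤ (3*D : ℕ) / (2:ℝ) := by exact_mod_cast Nat.cast_div_le
          _ = 3 * (D:ℝ) / 2 := by push_cast; ring
      have hmn : m ≤ n := by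
        have h32 : (3/2:ℝ) ≤ (n:ℝ) ^ (1-α) := by
          calc (3/2:ℝ) ≤ 4 := by norm_num
            _ ≤ e4 ^ (6:ℝ) := by
                calc (4:ℝ) ≤ e4 := he4_1
                  _ = e4 ^ (1:ℝ) := (Real.rpow_one _).symm
                  _ ≤ e4 ^ (6:ℝ) := Real.rpow_le_rpow_of_exponent_le (by linarith) (by norm_num)
            _ ≤ _ := hnNα
        have hd0 : (0:ℝ) < (d:ℝ) := by exact_mod_cast hd
        rw [hnd, le_div_iff₀ hd0] at h32
        have : (m:ℝ) ≤ (n:ℝ) := by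
          calc (m:ℝ) ≤ 3 * (D:ℝ) / 2 := hmr
            _ ≤ 3 * (d:ℝ) / 2 := by linarith
            _ ≤ (n:ℝ) := by linarith
        exact_mod_cast this
      -- step A : Tbin ≤ V2 n m * 4^m
      have stepA : Tbin n d ≤ V2 n m * 4 ^ m := by
        rw [hTbinP]
        calc P.card / 2 ≤ P.card := Nat.div_le_self _ _
          _ ≤ V2 n m * 4 ^ m := by
              apply card_le_of_supp_small
              intro p hp
              obtain ⟨-, -, -, h1, h2, h3⟩ := (Finset.mem_filter.1 hp).2
              have := two_mul_supp p.1 p.2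
              omega
      -- step B : (V2 n m * 4^m : ℝ) ≤ (e4 * nD) ^ m
      have stepB : ((V2 n m * 4 ^ m : ℕ) : ℝ) ≤ (e4 * nD) ^ m := by
        push_cast
        have hV2 := V2_le_pow n m hm1 hmn
        have hexpm : Real.exp m = Real.exp 1 ^ m := by
          rw [← Real.exp_nat_mul, mul_one]
        have hdiv : (n:ℝ) / m ≤ nD := by
          apply div_le_div_of_nonneg_left hn0.le hD0
          exact_mod_cast hDm
        calc (V2 n m : ℝ) * 4 ^ m ≤ ((n:ℝ)/m) ^ m * Real.exp m * 4 ^ m := by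
              apply mul_le_mul_of_nonneg_right hV2 (by positivity)
          _ = ((n:ℝ)/m * (4 * Real.exp 1)) ^ m := by
              rw [hexpm, mul_pow, mul_pow]; ring
          _ ≤ (nD * e4) ^ m := by
              apply pow_le_pow_left₀ (by positivity)
              rw [← he4]
              exact mul_le_mul_of_nonneg_right hdiv he4_pos.le
          _ = (e4 * nD) ^ m := by ring_nf
      -- step C : (e4*nD)^m ≤ nD ^ ((7/4) * D)
      have stepC : (e4 * nD) ^ m ≤ nD ^ ((7/4 : ℝ) * (D:ℝ)) := by
        have he4nD : e4 ≤ nD ^ (1/6 : ℝ) := by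
          calc e4 = (e4 ^ (6:ℝ)) ^ (1/6:ℝ) := by
                rw [← Real.rpow_mul he4_pos.le]; norm_num
            _ ≤ nD ^ (1/6:ℝ) := Real.rpow_le_rpow (by positivity) hbD (by norm_num)
        have hbase : e4 * nD ≤ nD ^ (7/6 : ℝ) := by
          calc e4 * nD ≤ nD ^ (1/6:ℝ) * nD := mul_le_mul_of_nonneg_right he4nD hnD0.le
            _ = nD ^ (1/6:ℝ) * nD ^ (1:ℝ) := by rw [Real.rpow_one]
            _ = nD ^ (7/6:ℝ) := by rw [← Real.rpow_add hnD0]; norm_num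
        calc (e4 * nD) ^ m ≤ (nD ^ (7/6:ℝ)) ^ m := by
              apply pow_le_pow_left₀ (by positivity) hbase
          _ = nD ^ ((7/6:ℝ) * m) := by
              rw [← Real.rpow_natCast (nD ^ (7/6:ℝ)) m, ← Real.rpow_mul hnD0.le]
          _ ≤ nD ^ ((7/4:ℝ) * (D:ℝ)) := by
              apply Real.rpow_le_rpow_of_exponent_le hnD1
              linarith [hmr]
      -- step D : nD ^ ((7/4) D) ≤ D' ^ (2 - ε)
      have stepD : nD ^ ((7/4 : ℝ) * (D:ℝ)) ≤ (D':ℝ) ^ (2 - ε) := by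
        have h1 : nD ^ ((7/4 : ℝ) * (D:ℝ)) ≤ nD ^ ((2 - ε) * (D:ℝ)) := by
          apply Real.rpow_le_rpow_of_exponent_le hnD1
          have : (7/4:ℝ) ≤ 2 - ε := by linarith
          nlinarith [hD0]
        have h2 : nD ^ ((2 - ε) * (D:ℝ)) ≤ (D':ℝ) ^ (2 - ε) := by
          have hch : nD ^ (D:ℕ) ≤ (D':ℝ) := by
            calc nD ^ (D:ℕ) ≤ (n.choose D : ℝ) := pow_div_le_choose D n hDn
              _ ≤ (D':ℝ) := by exact_mod_cast hD'choose
          calc nD ^ ((2 - ε) * (D:ℝ)) = (nD ^ ((D:ℕ):ℝ)) ^ (2 - ε) := by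
                rw [← Real.rpow_mul hnD0.le]; ring_nf
            _ = (nD ^ (D:ℕ)) ^ (2 - ε) := by rw [Real.rpow_natCast]
            _ ≤ (D':ℝ) ^ (2 - ε) := Real.rpow_le_rpow (by positivity) hch h2ε
        linarith
      calc (Tbin n d : ℝ) ≤ ((V2 n m * 4 ^ m : ℕ) : ℝ) := by exact_mod_cast stepA
        _ ≤ (e4 * nD) ^ m := stepB
        _ ≤ nD ^ ((7/4 : ℝ) * (D:ℝ)) := stepC
        _ ≤ (D':ℝ) ^ (2 - ε) := stepD
end

section
/- Let α and δ be constants with 0 < α < 1, 0 < δ < 1, and 1 − δ − α > 0. Then D_{d−1}/D^{1−δ} tends to 0 as n → ∞ along d = n^α; that is, for every ε > 0 there exists N such that for all integers n ≥ N and all positive integers d with (d : ℝ) = n^α, one has D_{d−1} ≤ ε·D^{1−δ}, where D = V(n,d−1) − 1. -/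
open Finset

lemma numD_le_fact (m : ℕ) : numDerangements m ≤ m.factorial := by
  rw [← card_derangements_fin_eq_numDerangements]
  calc Fintype.card (derangements (Fin m))
      ≤ Fintype.card (Equiv.Perm (Fin m)) :=
        Fintype.card_le_of_injective _ Subtype.val_injective
    _ = m.factorial := by simp [Fintype.card_perm]

lemma numD_pos (k : ℕ) : 0 < numDerangements (k + 2) := by
  induction k with
  | zero => simp [numDerangements_add_two]
  | succ k ih =>
    have ih' : 0 < numDerangements (k + 1 + 1) := ih
    rw [numDerangements_add_two]
    exact Nat.mul_pos (by omega) (by omega)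

lemma aux_V (n m : ℕ) (hm : 1 ≤ m) :
    Nat.choose n m * numDerangements m + 1 ≤ V n m := by
  have hsub : ({0, m} : Finset ℕ) ⊆ Finset.range (m + 1) := by
    intro x hx; simp only [Finset.mem_insert, Finset.mem_singleton] at hx
    rcases hx with h | h <;> simp [h]
  have hle := Finset.sum_le_sum_of_subset (f := fun i => Nat.choose n i * numDerangements i) hsub
  rw [Finset.sum_pair (by omega : (0:ℕ) ≠ m)] at hle
  simp only [Nat.choose_zero_right, numDerangements_zero, one_mul] at hle
  have : (1 : ℕ) + Nat.choose n m * numDerangements m ≤ V n m := hle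
  omega

set_option maxHeartbeats 1000000 in
theorem stmt9 (α δ : ℝ) (hα1 : 0 < α) (hα2 : α < 1) (hδ1 : 0 < δ) (hδ2 : δ < 1)
    (h : 0 < 1 - δ - α) :
    ∀ ε : ℝ, 0 < ε → ∃ N : ℕ, ∀ n : ℕ, N ≤ n → ∀ d : ℕ, 0 < d → (d : ℝ) = (n : ℝ) ^ α →
      (numDerangements (d - 1) : ℝ) ≤ ε * ((V n (d - 1) - 1 : ℕ) : ℝ) ^ (1 - δ) := by
  intro ε hε
  set γ : ℝ := (1 - δ - α) / 2 with hγdef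
  have hγ : 0 < γ := by rw [hγdef]; linarith
  set c : ℝ := (1 - δ - α) * (1 + δ) / 2 with hcdef
  have hc : 0 < c := by rw [hcdef]; nlinarith
  have hexp : (1 - α - γ) * (1 - δ) = α * δ + c := by rw [hγdef, hcdef]; ring
  have h1αγ : 0 < 1 - α - γ := by rw [hγdef]; linarith
  have tend : ∀ b : ℝ, 0 < b →
      Filter.Tendsto (fun n : ℕ => (n : ℝ) ^ b) Filter.atTop Filter.atTop :=
    fun b hb => (tendsto_rpow_atTop hb).comp tendsto_natCast_atTop_atTop
  have hev : ∀ᶠ n : ℕ in Filter.atTop,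
      2 ≤ n ∧ (2 : ℝ) ≤ (n : ℝ) ^ γ ∧ 1 ≤ ε * (n : ℝ) ^ c := by
    filter_upwards [Filter.eventually_ge_atTop 2, (tend γ hγ).eventually_ge_atTop 2,
      (tend c hc).eventually_ge_atTop (1 / ε)] with n h1 h2 h3
    refine ⟨h1, h2, ?_⟩
    rw [div_le_iff₀ hε] at h3
    linarith [mul_comm ((n : ℝ) ^ c) ε]
  obtain ⟨N, hN⟩ := Filter.eventually_atTop.mp hev
  refine ⟨N, fun n hn d hd hdn => ?_⟩
  obtain ⟨hn2, hnγ, hnc⟩ := hN n hn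
  have hn1 : (1 : ℝ) ≤ (n : ℝ) := by exact_mod_cast Nat.one_le_of_lt hn2
  have hn0 : (0 : ℝ) < (n : ℝ) := by linarith
  have hd1 : (1 : ℝ) < (d : ℝ) := by
    rw [hdn]
    exact (Real.one_lt_rpow_iff_of_pos hn0).mpr
      (Or.inl ⟨by exact_mod_cast hn2, hα1⟩)
  have hd2 : 2 ≤ d := by
    have : (1 : ℕ) < d := by exact_mod_cast hd1
    omega
  set m := d - 1 with hmdef
  have hdm : d = m + 1 := by omega
  have hm1 : 1 ≤ m := by omega
  rcases eq_or_lt_of_le hm1 with hm | hm2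
  · have hz : numDerangements m = 0 := by rw [← hm]; rfl
    rw [hz]
    push_cast
    positivity
  · have hm2 : 2 ≤ m := hm2
    have h22 : m - 2 + 2 = m := by omega
    have hDm1 : 1 ≤ numDerangements m := by
      have := numD_pos (m - 2); rwa [h22] at this
    have hDpos : (0 : ℝ) < (numDerangements m : ℝ) := by exact_mod_cast hDm1
    have hmr1 : (1 : ℝ) ≤ (m : ℝ) := by exact_mod_cast hm1
    have hmr : (m : ℝ) = (n : ℝ) ^ α - 1 := by
      have hcast : ((m : ℕ) : ℝ) = (d : ℝ) - 1 := by rw [hdm]; push_cast; ring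
      rw [hcast, hdn]
    have hmle : (m : ℝ) ≤ (n : ℝ) ^ α := by
      rw [hmr]; linarith
    have hnαn : (n : ℝ) ^ α ≤ (n : ℝ) := by
      calc (n : ℝ) ^ α ≤ (n : ℝ) ^ (1 : ℝ) :=
            Real.rpow_le_rpow_of_exponent_le hn1 (le_of_lt hα2)
        _ = (n : ℝ) := Real.rpow_one _
    have hmn : m ≤ n := by
      have : (m : ℝ) ≤ (n : ℝ) := le_trans hmle hnαn
      exact_mod_cast this
    -- choose lower bound
    have hCnat : (n - m) ^ m ≤ Nat.choose n m * m ^ m := by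
      calc (n - m) ^ m ≤ (n + 1 - m) ^ m := Nat.pow_le_pow_left (by omega) m
        _ ≤ n.descFactorial m := Nat.pow_sub_le_descFactorial n m
        _ = m.factorial * n.choose m := Nat.descFactorial_eq_factorial_mul_choose n m
        _ ≤ m ^ m * n.choose m := Nat.mul_le_mul_right _ (Nat.factorial_le_pow m)
        _ = Nat.choose n m * m ^ m := Nat.mul_comm _ _
    have hCr : ((n : ℝ) - (m : ℝ)) ^ (m : ℕ) ≤ (Nat.choose n m : ℝ) * (m : ℝ) ^ (m : ℕ) := by
      have hcast := (Nat.cast_le (α := ℝ)).2 hCnat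
      rw [Nat.cast_pow, Nat.cast_sub hmn, Nat.cast_mul, Nat.cast_pow] at hcast
      exact hcast
    set key : ℝ := (n : ℝ) ^ (1 - α - γ) with hkey
    have hkeypos : 0 < key := Real.rpow_pos_of_pos hn0 _
    have hkeym : key * (m : ℝ) ≤ (n : ℝ) - (m : ℝ) := by
      have h1 : key * (m : ℝ) ≤ key * (n : ℝ) ^ α :=
        mul_le_mul_of_nonneg_left hmle hkeypos.le
      have h2 : key * (n : ℝ) ^ α = (n : ℝ) ^ (1 - γ) := by
        rw [hkey, ← Real.rpow_add hn0]; ring_nf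
      have ha : (n : ℝ) ^ α ≤ (n : ℝ) ^ (1 - γ) :=
        Real.rpow_le_rpow_of_exponent_le hn1 (by rw [hγdef]; linarith)
      have hb : (2 : ℝ) * (n : ℝ) ^ (1 - γ) ≤ (n : ℝ) := by
        have hsplit : (n : ℝ) = (n : ℝ) ^ (1 - γ) * (n : ℝ) ^ γ := by
          rw [← Real.rpow_add hn0]; norm_num
        nlinarith [Real.rpow_pos_of_pos hn0 (1 - γ)]
      linarith
    have hCkey : key ^ (m : ℕ) ≤ (Nat.choose n m : ℝ) := by
      have hp : (key * (m : ℝ)) ^ (m : ℕ) ≤ ((n : ℝ) - (m : ℝ)) ^ (m : ℕ) :=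
        pow_le_pow_left₀ (by positivity) hkeym m
      rw [mul_pow] at hp
      have hmpow : (0 : ℝ) < (m : ℝ) ^ (m : ℕ) := by positivity
      exact le_of_mul_le_mul_right (le_trans hp hCr) hmpow
    have hCkey' : (n : ℝ) ^ ((1 - α - γ) * (m : ℝ)) ≤ (Nat.choose n m : ℝ) := by
      have heq : key ^ (m : ℕ) = (n : ℝ) ^ ((1 - α - γ) * (m : ℝ)) := by
        rw [hkey, ← Real.rpow_natCast ((n : ℝ) ^ (1 - α - γ)) m, ← Real.rpow_mul hn0.le]
      rwa [heq] at hCkey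
    have hDmle : (numDerangements m : ℝ) ≤ (n : ℝ) ^ (α * (m : ℝ)) := by
      have h1 : (numDerangements m : ℝ) ≤ (m : ℝ) ^ (m : ℕ) := by
        exact_mod_cast le_trans (numD_le_fact m) (Nat.factorial_le_pow m)
      calc (numDerangements m : ℝ) ≤ (m : ℝ) ^ (m : ℕ) := h1
        _ ≤ ((n : ℝ) ^ α) ^ (m : ℕ) := pow_le_pow_left₀ (by positivity) hmle m
        _ = (n : ℝ) ^ (α * (m : ℝ)) := by
            rw [← Real.rpow_natCast ((n : ℝ) ^ α) m, ← Real.rpow_mul hn0.le]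
    have hVn : (Nat.choose n m : ℝ) * (numDerangements m : ℝ) ≤ ((V n m - 1 : ℕ) : ℝ) := by
      have h0 := aux_V n m hm1
      have h1 : Nat.choose n m * numDerangements m ≤ V n m - 1 := by omega
      have := (Nat.cast_le (α := ℝ)).2 h1
      push_cast at this ⊢
      convert this using 2
    have h1δ : (0 : ℝ) ≤ 1 - δ := by linarith
    have hfinal : (numDerangements m : ℝ) ^ δ ≤ ε * (Nat.choose n m : ℝ) ^ (1 - δ) := by
      have e1 : (numDerangements m : ℝ) ^ δ ≤ ((n : ℝ) ^ (α * (m : ℝ))) ^ δ :=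
        Real.rpow_le_rpow (Nat.cast_nonneg _) hDmle hδ1.le
      have e2 : ((n : ℝ) ^ (α * (m : ℝ))) ^ δ = (n : ℝ) ^ (α * (m : ℝ) * δ) := by
        rw [← Real.rpow_mul hn0.le]
      have e4 : ((n : ℝ) ^ ((1 - α - γ) * (m : ℝ))) ^ (1 - δ) ≤ (Nat.choose n m : ℝ) ^ (1 - δ) :=
        Real.rpow_le_rpow (by positivity) hCkey' h1δ
      have e5 : ((n : ℝ) ^ ((1 - α - γ) * (m : ℝ))) ^ (1 - δ)
          = (n : ℝ) ^ (α * (m : ℝ) * δ) * (n : ℝ) ^ (c * (m : ℝ)) := by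
        rw [← Real.rpow_mul hn0.le, ← Real.rpow_add hn0]
        congr 1
        have : (1 - α - γ) * (m : ℝ) * (1 - δ) = ((1 - α - γ) * (1 - δ)) * (m : ℝ) := by ring
        rw [this, hexp]; ring
      have e6 : 1 ≤ ε * (n : ℝ) ^ (c * (m : ℝ)) := by
        have hce : (n : ℝ) ^ c ≤ (n : ℝ) ^ (c * (m : ℝ)) :=
          Real.rpow_le_rpow_of_exponent_le hn1 (le_mul_of_one_le_right hc.le hmr1)
        have := mul_le_mul_of_nonneg_left hce hε.le
        linarith
      calc (numDerangements m : ℝ) ^ δ ≤ (n : ℝ) ^ (α * (m : ℝ) * δ) := e2 ▸ e1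
        _ = 1 * (n : ℝ) ^ (α * (m : ℝ) * δ) := (one_mul _).symm
        _ ≤ (ε * (n : ℝ) ^ (c * (m : ℝ))) * (n : ℝ) ^ (α * (m : ℝ) * δ) :=
            mul_le_mul_of_nonneg_right e6 (by positivity)
        _ = ε * ((n : ℝ) ^ (α * (m : ℝ) * δ) * (n : ℝ) ^ (c * (m : ℝ))) := by ring
        _ = ε * ((n : ℝ) ^ ((1 - α - γ) * (m : ℝ))) ^ (1 - δ) := by rw [e5]
        _ ≤ ε * (Nat.choose n m : ℝ) ^ (1 - δ) := mul_le_mul_of_nonneg_left e4 hε.le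
    calc (numDerangements m : ℝ)
        = (numDerangements m : ℝ) ^ δ * (numDerangements m : ℝ) ^ (1 - δ) := by
          rw [← Real.rpow_add hDpos, show δ + (1 - δ) = 1 by ring, Real.rpow_one]
      _ ≤ (ε * (Nat.choose n m : ℝ) ^ (1 - δ)) * (numDerangements m : ℝ) ^ (1 - δ) :=
          mul_le_mul_of_nonneg_right hfinal (by positivity)
      _ = ε * ((Nat.choose n m : ℝ) * (numDerangements m : ℝ)) ^ (1 - δ) := by
          rw [Real.mul_rpow (Nat.cast_nonneg _) (Nat.cast_nonneg _)]; ring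
      _ ≤ ε * ((V n m - 1 : ℕ) : ℝ) ^ (1 - δ) :=
          mul_le_mul_of_nonneg_left
            (Real.rpow_le_rpow (by positivity) hVn h1δ) hε.le
end

section
/- Let α be a constant with 0 < α < 1 and let ε > 0. Then (d² + d)/D^ε tends to 0 as n → ∞ along d = n^α; that is, for every η > 0 there exists N such that for all integers n ≥ N and all positive integers d with (d : ℝ) = n^α, one has d² + d ≤ η·D^ε, where D = V(n,d−1) − 1. -/
open Finset

lemma one_le_numDer : ∀ m : ℕ, 1 ≤ numDerangements (m + 2) := by
  intro m
  induction m using Nat.strong_induction_on with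
  | _ m ih =>
    match m with
    | 0 => simp [numDerangements_add_two]
    | Nat.succ m =>
      have h : 1 ≤ numDerangements (m + 1 + 1) := ih m (Nat.lt_succ_self m)
      rw [numDerangements_add_two]
      calc 1 ≤ numDerangements (m + 1) + numDerangements (m + 1 + 1) :=
            le_trans h (Nat.le_add_left _ _)
        _ ≤ (m + 1 + 1) * (numDerangements (m + 1) + numDerangements (m + 1 + 1)) :=
            Nat.le_mul_of_pos_left _ (by omega)


theorem stmt10 (α ε : ℝ) (hα1 : 0 < α) (hα2 : α < 1) (hε : 0 < ε) :
    ∀ η : ℝ, 0 < η → ∃ N : ℕ, ∀ n : ℕ, N ≤ n → ∀ d : ℕ, 0 < d → (d : ℝ) = (n : ℝ) ^ α →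
      (d : ℝ) ^ 2 + (d : ℝ) ≤ η * ((V n (d - 1) - 1 : ℕ) : ℝ) ^ ε := by
  intro η hη
  set k : ℕ := ⌈3 / ε⌉₊ + 3 with hkdef
  have hk3 : 3 ≤ k := by omega
  have hkε : 3 ≤ ((k - 1 : ℕ) : ℝ) * ε := by
    have h1 : 3 / ε ≤ (⌈3 / ε⌉₊ : ℝ) := Nat.le_ceil _
    have h2 : ((⌈3 / ε⌉₊ : ℕ) : ℝ) ≤ ((k - 1 : ℕ) : ℝ) := by
      exact_mod_cast Nat.cast_le.mpr (by omega : ⌈3 / ε⌉₊ ≤ k - 1)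
    have h3 := (div_le_iff₀ hε).mp (le_trans h1 h2)
    linarith
  set c : ℕ := 2 ^ k * k.factorial with hcdef
  have h2k_le_c : 2 * k ≤ c := by
    have h1 : k - 1 < 2 ^ (k - 1) := Nat.lt_two_pow_self
    have h2 : 2 * k ≤ 2 ^ k := by
      calc 2 * k ≤ 2 * 2 ^ (k - 1) := by omega
        _ = 2 ^ (k - 1) * 2 := (pow_succ 2 (k - 1) ▸ Nat.mul_comm 2 (2 ^ (k - 1)))
        _ = 2 ^ (k - 1 + 1) := (pow_succ 2 (k - 1)).symm
        _ = 2 ^ k := by rw [show k - 1 + 1 = k by omega]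
    calc 2 * k ≤ 2 ^ k := h2
      _ ≤ 2 ^ k * k.factorial := Nat.le_mul_of_pos_right _ k.factorial_pos
  refine ⟨max (max ⌈((k : ℝ) + 1) ^ (1 / α)⌉₊ c) (max 1 ⌈2 / η⌉₊), fun n hn d hd hdn => ?_⟩
  have hnN1 : ⌈((k : ℝ) + 1) ^ (1 / α)⌉₊ ≤ n :=
    le_trans (le_trans (le_max_left _ _) (le_max_left _ _)) hn
  have hnc : c ≤ n := le_trans (le_trans (le_max_right _ _) (le_max_left _ _)) hn
  have hn1 : 1 ≤ n := le_trans (le_trans (le_max_left _ _) (le_max_right _ _)) hn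
  have hnη : ⌈2 / η⌉₊ ≤ n := le_trans (le_trans (le_max_right _ _) (le_max_right _ _)) hn
  have hnR1 : (1 : ℝ) ≤ (n : ℝ) := by exact_mod_cast hn1
  -- d ≥ k + 1
  have hdk : k + 1 ≤ d := by
    have hN1 : (((k : ℝ) + 1) ^ (1 / α) : ℝ) ≤ (n : ℝ) :=
      le_trans (Nat.le_ceil _) (by exact_mod_cast hnN1)
    have hb : (0 : ℝ) ≤ (k : ℝ) + 1 := by positivity
    have hkd : (k : ℝ) + 1 ≤ (d : ℝ) := by
      rw [hdn]
      calc (k : ℝ) + 1 = (((k : ℝ) + 1) ^ (1 / α)) ^ α := by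
            rw [← Real.rpow_mul hb, one_div_mul_cancel (ne_of_gt hα1), Real.rpow_one]
        _ ≤ (n : ℝ) ^ α := Real.rpow_le_rpow (by positivity) hN1 hα1.le
    exact_mod_cast hkd
  -- Nat lower bound on D
  have hDer : 1 ≤ numDerangements k := by
    have := one_le_numDer (k - 2)
    rwa [show k - 2 + 2 = k by omega] at this
  have hV : 1 + n.choose k * numDerangements k ≤ V n (d - 1) := by
    have hsub : ({0, k} : Finset ℕ) ⊆ Finset.range (d - 1 + 1) := by
      intro x hx
      simp only [Finset.mem_insert, Finset.mem_singleton] at hx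
      simp only [Finset.mem_range]
      omega
    have hpair : ∑ i ∈ ({0, k} : Finset ℕ), n.choose i * numDerangements i
        = 1 + n.choose k * numDerangements k := by
      rw [Finset.sum_pair (by omega : (0 : ℕ) ≠ k)]
      simp [numDerangements_zero]
    calc 1 + n.choose k * numDerangements k
        = ∑ i ∈ ({0, k} : Finset ℕ), n.choose i * numDerangements i := hpair.symm
      _ ≤ ∑ i ∈ Finset.range (d - 1 + 1), n.choose i * numDerangements i :=
          Finset.sum_le_sum_of_subset hsub
      _ = V n (d - 1) := rfl
  have hD : n.choose k ≤ V n (d - 1) - 1 := by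
    have h2 : n.choose k ≤ n.choose k * numDerangements k := Nat.le_mul_of_pos_right _ hDer
    omega
  -- Real lower bound
  set x : ℝ := ((V n (d - 1) - 1 : ℕ) : ℝ) with hxdef
  have hxc : (n.choose k : ℝ) ≤ x := by rw [hxdef]; exact_mod_cast hD
  have hkn : k ≤ n := by omega
  have hkR : 2 * (k : ℝ) ≤ (n : ℝ) := by exact_mod_cast (by omega : 2 * k ≤ n)
  have hm : (n : ℝ) / 2 ≤ ((n + 1 - k : ℕ) : ℝ) := by
    have hcast : ((n + 1 - k : ℕ) : ℝ) = ((n : ℝ) + 1) - (k : ℝ) := by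
      push_cast [Nat.cast_sub (by omega : k ≤ n + 1)]
      ring
    rw [hcast]; linarith
  have hcR : (0 : ℝ) < 2 ^ k * (k.factorial : ℝ) := by positivity
  have hnk1 : (n : ℝ) ^ (k - 1) ≤ x := by
    have hcn : ((2 : ℝ) ^ k * (k.factorial : ℝ)) ≤ (n : ℝ) := by
      calc ((2 : ℝ) ^ k * (k.factorial : ℝ)) = (c : ℕ) := by push_cast [hcdef]; ring
        _ ≤ (n : ℝ) := by exact_mod_cast hnc
    calc (n : ℝ) ^ (k - 1) ≤ (n : ℝ) ^ k / (2 ^ k * (k.factorial : ℝ)) := by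
          rw [le_div_iff₀ hcR]
          calc (n : ℝ) ^ (k - 1) * (2 ^ k * (k.factorial : ℝ))
              ≤ (n : ℝ) ^ (k - 1) * (n : ℝ) := by
                apply mul_le_mul_of_nonneg_left hcn (by positivity)
            _ = (n : ℝ) ^ (k - 1 + 1) := (pow_succ _ _).symm
            _ = (n : ℝ) ^ k := by rw [show k - 1 + 1 = k by omega]
      _ = ((n : ℝ) / 2) ^ k / (k.factorial : ℝ) := by rw [div_pow]; ring
      _ ≤ ((n + 1 - k : ℕ) : ℝ) ^ k / (k.factorial : ℝ) := by
          gcongr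
      _ ≤ (n.choose k : ℝ) := by
          have h := Nat.pow_le_choose k n (α := ℝ)
          push_cast at h ⊢
          try exact h
      _ ≤ x := hxc
  have hrp : (n : ℝ) ^ (3 : ℕ) ≤ x ^ ε := by
    calc (n : ℝ) ^ (3 : ℕ) = (n : ℝ) ^ ((3 : ℕ) : ℝ) := (Real.rpow_natCast _ 3).symm
      _ ≤ (n : ℝ) ^ (((k - 1 : ℕ) : ℝ) * ε) := by
          apply Real.rpow_le_rpow_of_exponent_le hnR1
          push_cast
          linarith
      _ = ((n : ℝ) ^ (((k - 1 : ℕ)) : ℝ)) ^ ε := Real.rpow_mul (by positivity) _ _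
      _ = ((n : ℝ) ^ (k - 1 : ℕ)) ^ ε := by rw [Real.rpow_natCast]
      _ ≤ x ^ ε := Real.rpow_le_rpow (by positivity) hnk1 hε.le
  have hdn' : (d : ℝ) ≤ (n : ℝ) := by
    rw [hdn]
    calc (n : ℝ) ^ α ≤ (n : ℝ) ^ (1 : ℝ) := Real.rpow_le_rpow_of_exponent_le hnR1 hα2.le
      _ = (n : ℝ) := Real.rpow_one _
  have hηn : 2 ≤ η * (n : ℝ) := by
    have h1 : (2 / η : ℝ) ≤ (n : ℝ) :=
      le_trans (Nat.le_ceil _) (by exact_mod_cast hnη)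
    rw [div_le_iff₀ hη] at h1
    linarith
  have hd0 : (0 : ℝ) ≤ (d : ℝ) := by positivity
  calc (d : ℝ) ^ 2 + (d : ℝ) ≤ (n : ℝ) ^ 2 + (n : ℝ) := by gcongr
    _ ≤ 2 * (n : ℝ) ^ 2 := by nlinarith
    _ ≤ η * (n : ℝ) ^ (3 : ℕ) := by nlinarith [sq_nonneg (n : ℝ), mul_nonneg (sub_nonneg.mpr hηn) (sq_nonneg (n : ℝ))]
    _ ≤ η * x ^ ε := mul_le_mul_of_nonneg_left hrp hη.le
end

section
/- Let n and d be positive integers with d ≤ n. Then P(n,d)·(V(n,d−1) + P[n,d−1]) ≥ 2·n!. -/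
open Finset

lemma permDist_self {n : ℕ} (x : Equiv.Perm (Fin n)) : permDist x x = 0 := by
  simp [permDist]

lemma permDist_eq_wt {n : ℕ} (x y : Equiv.Perm (Fin n)) :
    permDist x y = permWt (x * y⁻¹) := by
  unfold permDist permWt
  apply Finset.card_bij (fun i _ => y i)
  · intro a ha
    simp only [mem_filter, mem_univ, true_and, Equiv.Perm.mul_apply,
      Equiv.Perm.inv_def, Equiv.symm_apply_apply] at ha ⊢
    exact Finset.mem_filter.mpr ⟨Finset.mem_univ _, by simpa using ha⟩
  · intro a _ b _ h
    exact y.injective h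
  · intro b hb
    simp only [mem_filter, mem_univ, true_and, Equiv.Perm.mul_apply] at hb
    exact ⟨y⁻¹ b, by simp only [mem_filter, mem_univ, true_and]; simpa using (Finset.mem_filter.mp hb).2, by simp⟩

lemma supp_key {n : ℕ} {S : Finset (Fin n)} {π : Equiv.Perm (Fin n)}
    (hπ : (Finset.univ.filter fun j => π j ≠ j) = S) :
    ∀ j : Fin n, j ∈ S ↔ π j ∈ S := by
  have hmem : ∀ j : Fin n, j ∈ S ↔ π j ≠ j := by
    intro j; rw [← hπ]; simp
  intro j
  constructor
  · intro hj
    rw [hmem]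
    intro hfix
    exact ((hmem j).1 hj) (π.injective (by rw [hfix]))
  · intro hj
    by_contra hns
    have : π j = j := by
      by_contra h
      exact hns ((hmem j).2 h)
    rw [this] at hj
    exact hns hj

noncomputable def restrictPerm {n : ℕ} {S : Finset (Fin n)} {π : Equiv.Perm (Fin n)}
    (hπ : (Finset.univ.filter fun j => π j ≠ j) = S) : Equiv.Perm {x // x ∈ S} :=
  π.subtypePerm (fun j => (supp_key hπ j).symm)

lemma restrict_mem {n : ℕ} {S : Finset (Fin n)} {π : Equiv.Perm (Fin n)}
    (hπ : (Finset.univ.filter fun j => π j ≠ j) = S) :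
    restrictPerm hπ ∈ derangements {x // x ∈ S} := by
  intro x hc
  have hx : π x ≠ (x : Fin n) := by
    have hm : (x : Fin n) ∈ Finset.univ.filter fun j => π j ≠ j := by
      rw [hπ]; exact x.2
    simpa using hm
  exact hx (congrArg Subtype.val hc)

lemma restrict_inj {n : ℕ} {S : Finset (Fin n)} {π τ : Equiv.Perm (Fin n)}
    (hπ : (Finset.univ.filter fun j => π j ≠ j) = S)
    (hτ : (Finset.univ.filter fun j => τ j ≠ j) = S)
    (h : restrictPerm hπ = restrictPerm hτ) : π = τ := by
  apply Equiv.ext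
  intro j
  by_cases hj : j ∈ S
  · have h2 : (restrictPerm hπ) ⟨j, hj⟩ = (restrictPerm hτ) ⟨j, hj⟩ := by rw [h]
    exact congrArg Subtype.val h2
  · have h1 : π j = j := by
      by_contra hc
      exact hj (hπ ▸ (by simp [hc] : j ∈ Finset.univ.filter fun j => π j ≠ j))
    have h2 : τ j = j := by
      by_contra hc
      exact hj (hτ ▸ (by simp [hc] : j ∈ Finset.univ.filter fun j => τ j ≠ j))
    rw [h1, h2]

lemma fiber_card_le_s12 {n : ℕ} (S : Finset (Fin n)) :
    (Finset.univ.filter fun π : Equiv.Perm (Fin n) =>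
      (Finset.univ.filter fun j => π j ≠ j) = S).card ≤ numDerangements S.card := by
  classical
  rw [← Fintype.card_coe, ← Fintype.card_coe S, ← card_derangements_eq_numDerangements]
  apply Fintype.card_le_of_injective
    (fun πh => ⟨restrictPerm (Finset.mem_filter.mp πh.2).2,
      restrict_mem (Finset.mem_filter.mp πh.2).2⟩)
  intro a b h
  apply Subtype.ext
  exact restrict_inj _ _ (Subtype.mk_eq_mk.mp h)

lemma wt_count_le {n : ℕ} (i : ℕ) :
    (Finset.univ.filter fun π : Equiv.Perm (Fin n) => permWt π = i).card
      ≤ Nat.choose n i * numDerangements i := by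
  classical
  have hsub : (Finset.univ.filter fun π : Equiv.Perm (Fin n) => permWt π = i) ⊆
      (Finset.univ.powersetCard i).biUnion (fun S =>
        Finset.univ.filter fun π : Equiv.Perm (Fin n) =>
          (Finset.univ.filter fun j => π j ≠ j) = S) := by
    intro π hπ
    simp only [mem_filter, mem_univ, true_and] at hπ
    rw [mem_biUnion]
    refine ⟨Finset.univ.filter fun j => π j ≠ j, ?_, by simp⟩
    rw [Finset.mem_powersetCard]
    exact ⟨Finset.subset_univ _, hπ⟩
  calc (Finset.univ.filter fun π : Equiv.Perm (Fin n) => permWt π = i).card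
      ≤ _ := Finset.card_le_card hsub
    _ ≤ ∑ S ∈ Finset.univ.powersetCard i,
        (Finset.univ.filter fun π : Equiv.Perm (Fin n) =>
          (Finset.univ.filter fun j => π j ≠ j) = S).card := Finset.card_biUnion_le
    _ ≤ ∑ _S ∈ Finset.univ.powersetCard i, numDerangements i := by
        apply Finset.sum_le_sum
        intro S hS
        rw [Finset.mem_powersetCard] at hS
        rw [← hS.2]
        exact fiber_card_le_s12 S
    _ = Nat.choose n i * numDerangements i := by
        rw [Finset.sum_const, smul_eq_mul, Finset.card_powersetCard, card_univ,
          Fintype.card_fin]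

lemma ball_card_le {n : ℕ} (c : Equiv.Perm (Fin n)) (r : ℕ) :
    (Finset.univ.filter fun σ => permDist σ c ≤ r).card ≤ V n r := by
  classical
  have hcard : (Finset.univ.filter fun σ => permDist σ c ≤ r).card
      = (Finset.univ.filter fun π : Equiv.Perm (Fin n) => permWt π ≤ r).card := by
    apply Finset.card_bij (fun σ _ => σ * c⁻¹)
    · intro σ hσ
      simp only [mem_filter, mem_univ, true_and] at hσ ⊢
      rwa [← permDist_eq_wt]
    · intro a _ b _ h
      exact mul_right_cancel h
    · intro π hπ
      simp only [mem_filter, mem_univ, true_and] at hπ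
      refine ⟨π * c, ?_, by simp⟩
      simp only [mem_filter, mem_univ, true_and]
      rwa [permDist_eq_wt, mul_inv_cancel_right]
  rw [hcard]
  have hsub : (Finset.univ.filter fun π : Equiv.Perm (Fin n) => permWt π ≤ r) ⊆
      (Finset.range (r+1)).biUnion (fun i =>
        Finset.univ.filter fun π : Equiv.Perm (Fin n) => permWt π = i) := by
    intro π hπ
    simp only [mem_filter, mem_univ, true_and] at hπ
    rw [mem_biUnion]
    exact ⟨permWt π, by simpa [Nat.lt_succ_iff] using hπ, by simp⟩
  calc _ ≤ _ := Finset.card_le_card hsub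
    _ ≤ ∑ i ∈ Finset.range (r+1),
        (Finset.univ.filter fun π : Equiv.Perm (Fin n) => permWt π = i).card :=
      Finset.card_biUnion_le
    _ ≤ V n r := Finset.sum_le_sum fun i _ => wt_count_le i

theorem stmt12 (n d : ℕ) (hn : 0 < n) (hd : 0 < d) (hdn : d ≤ n) :
    Pmax n d * (V n (d - 1) + PmaxLe n (d - 1)) ≥ 2 * Nat.factorial n := by
  classical
  have hPdef : Pmax n d
      = sSup {m | ∃ C : Finset (Equiv.Perm (Fin n)), IsPA n d C ∧ C.card = m} := rfl
  have hbdd : BddAbove {m | ∃ C : Finset (Equiv.Perm (Fin n)), IsPA n d C ∧ C.card = m} :=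
    ⟨Fintype.card (Equiv.Perm (Fin n)), by rintro m ⟨C, -, rfl⟩; exact C.card_le_univ⟩
  have hne : Set.Nonempty {m | ∃ C : Finset (Equiv.Perm (Fin n)), IsPA n d C ∧ C.card = m} :=
    ⟨0, ∅, by intro x hx; simp at hx, rfl⟩
  obtain ⟨C, hC, hCcard⟩ := Nat.sSup_mem hne hbdd
  -- covering property
  have hcover : ∀ σ : Equiv.Perm (Fin n), ∃ c ∈ C, permDist σ c ≤ d - 1 := by
    intro σ
    by_contra hcon
    push_neg at hcon
    have hfar : ∀ c ∈ C, d ≤ permDist σ c := by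
      intro c hc
      have := hcon c hc; omega
    have hσ : σ ∉ C := by
      intro hσ
      have := hfar σ hσ
      rw [permDist_self] at this
      omega
    have hPA : IsPA n d (insert σ C) := by
      intro x hx y hy hxy
      rcases Finset.mem_insert.mp hx with rfl | hxC
      · rcases Finset.mem_insert.mp hy with rfl | hyC
        · exact absurd rfl hxy
        · exact hfar y hyC
      · rcases Finset.mem_insert.mp hy with rfl | hyC
        · rw [permDist_comm]; exact hfar x hxC
        · exact hC x hxC y hyC hxy
    have hle := le_csSup hbdd
      (⟨insert σ C, hPA, rfl⟩ :
        (insert σ C).card ∈ {m | ∃ C : Finset (Equiv.Perm (Fin n)), IsPA n d C ∧ C.card = m})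
    rw [Finset.card_insert_of_notMem hσ, ← hCcard] at hle
    omega
  -- the multiplicity function
  set f : Equiv.Perm (Fin n) → ℕ :=
    fun σ => (C.filter fun c => permDist σ c ≤ d - 1).card with hfdef
  set Γ : Equiv.Perm (Fin n) → Finset (Equiv.Perm (Fin n)) :=
    fun c => Finset.univ.filter
      fun σ => (C.filter fun c' => permDist σ c' ≤ d - 1) = {c} with hΓdef
  have hΓpair : ∀ c, ∀ x ∈ Γ c, ∀ y ∈ Γ c, x ≠ y → permDist x y ≤ d - 1 := by
    intro c σ hσ τ hτ hst
    by_contra hcon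
    have hdist : d ≤ permDist σ τ := by omega
    simp only [hΓdef, Finset.mem_filter, Finset.mem_univ, true_and] at hσ hτ
    have hcC : c ∈ C := by
      have : c ∈ C.filter fun c' => permDist σ c' ≤ d - 1 := by
        rw [hσ]; exact Finset.mem_singleton_self c
      exact (Finset.mem_filter.mp this).1
    have hfarσ : ∀ c' ∈ C, c' ≠ c → d ≤ permDist σ c' := by
      intro c' hc' hnec
      by_contra hcon2
      have hle : permDist σ c' ≤ d - 1 := by omega
      have : c' ∈ C.filter fun c'' => permDist σ c'' ≤ d - 1 :=
        Finset.mem_filter.mpr ⟨hc', hle⟩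
      rw [hσ] at this
      exact hnec (Finset.mem_singleton.mp this)
    have hfarτ : ∀ c' ∈ C, c' ≠ c → d ≤ permDist τ c' := by
      intro c' hc' hnec
      by_contra hcon2
      have hle : permDist τ c' ≤ d - 1 := by omega
      have : c' ∈ C.filter fun c'' => permDist τ c'' ≤ d - 1 :=
        Finset.mem_filter.mpr ⟨hc', hle⟩
      rw [hτ] at this
      exact hnec (Finset.mem_singleton.mp this)
    have hσC : σ ∉ C.erase c := by
      intro hmem
      have h1 : σ ∈ C := Finset.mem_of_mem_erase hmem
      have h2 : σ ≠ c := Finset.ne_of_mem_erase hmem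
      have : σ ∈ C.filter fun c'' => permDist σ c'' ≤ d - 1 :=
        Finset.mem_filter.mpr ⟨h1, by rw [permDist_self]; omega⟩
      rw [hσ] at this
      exact h2 (Finset.mem_singleton.mp this)
    have hτC : τ ∉ C.erase c := by
      intro hmem
      have h1 : τ ∈ C := Finset.mem_of_mem_erase hmem
      have h2 : τ ≠ c := Finset.ne_of_mem_erase hmem
      have : τ ∈ C.filter fun c'' => permDist τ c'' ≤ d - 1 :=
        Finset.mem_filter.mpr ⟨h1, by rw [permDist_self]; omega⟩
      rw [hτ] at this
      exact h2 (Finset.mem_singleton.mp this)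
    have hPA' : IsPA n d (insert σ (insert τ (C.erase c))) := by
      intro x hx y hy hxy
      rcases Finset.mem_insert.mp hx with rfl | hx2
      · rcases Finset.mem_insert.mp hy with rfl | hy2
        · exact absurd rfl hxy
        rcases Finset.mem_insert.mp hy2 with rfl | hy3
        · exact hdist
        · exact hfarσ y (Finset.mem_of_mem_erase hy3) (Finset.ne_of_mem_erase hy3)
      rcases Finset.mem_insert.mp hx2 with rfl | hx3
      · rcases Finset.mem_insert.mp hy with rfl | hy2
        · rw [permDist_comm]; exact hdist
        rcases Finset.mem_insert.mp hy2 with rfl | hy3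
        · exact absurd rfl hxy
        · exact hfarτ y (Finset.mem_of_mem_erase hy3) (Finset.ne_of_mem_erase hy3)
      · rcases Finset.mem_insert.mp hy with rfl | hy2
        · rw [permDist_comm]
          exact hfarσ x (Finset.mem_of_mem_erase hx3) (Finset.ne_of_mem_erase hx3)
        rcases Finset.mem_insert.mp hy2 with rfl | hy3
        · rw [permDist_comm]
          exact hfarτ x (Finset.mem_of_mem_erase hx3) (Finset.ne_of_mem_erase hx3)
        · exact hC x (Finset.mem_of_mem_erase hx3) y (Finset.mem_of_mem_erase hy3) hxy
    have hcard' : (insert σ (insert τ (C.erase c))).card = C.card + 1 := by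
      rw [Finset.card_insert_of_notMem (by
        simp only [Finset.mem_insert]
        push_neg
        exact ⟨hst, hσC⟩), Finset.card_insert_of_notMem hτC,
        Finset.card_erase_of_mem hcC]
      have : 1 ≤ C.card := Finset.card_pos.mpr ⟨c, hcC⟩
      omega
    have hle := le_csSup hbdd
      (⟨insert σ (insert τ (C.erase c)), hPA', rfl⟩ :
        (insert σ (insert τ (C.erase c))).card
          ∈ {m | ∃ C : Finset (Equiv.Perm (Fin n)), IsPA n d C ∧ C.card = m})
    rw [hcard', ← hCcard] at hle
    omega
  have hf1 : ∀ σ, 1 ≤ f σ := by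
    intro σ
    obtain ⟨c, hc, hle⟩ := hcover σ
    exact Finset.card_pos.mpr ⟨c, Finset.mem_filter.mpr ⟨hc, hle⟩⟩
  set A := Finset.univ.filter (fun σ : Equiv.Perm (Fin n) => f σ = 1) with hAdef
  have hAsub : A ⊆ C.biUnion Γ := by
    intro σ hσ
    simp only [hAdef, Finset.mem_filter, Finset.mem_univ, true_and] at hσ
    obtain ⟨c, hc⟩ := Finset.card_eq_one.mp hσ
    have hcC : c ∈ C := by
      have : c ∈ C.filter fun c' => permDist σ c' ≤ d - 1 := by
        rw [hc]; exact Finset.mem_singleton_self c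
      exact (Finset.mem_filter.mp this).1
    refine Finset.mem_biUnion.mpr ⟨c, hcC, ?_⟩
    simp only [hΓdef, Finset.mem_filter, Finset.mem_univ, true_and]
    exact hc
  have hPbdd : BddAbove {m | ∃ Γ' : Finset (Equiv.Perm (Fin n)),
      (∀ x ∈ Γ', ∀ y ∈ Γ', x ≠ y → permDist x y ≤ d - 1) ∧ Γ'.card = m} :=
    ⟨Fintype.card (Equiv.Perm (Fin n)), by rintro m ⟨G, -, rfl⟩; exact G.card_le_univ⟩
  have hΓcard : ∀ c, (Γ c).card ≤ PmaxLe n (d - 1) := by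
    intro c
    exact le_csSup hPbdd ⟨Γ c, hΓpair c, rfl⟩
  have hAcard : A.card ≤ C.card * PmaxLe n (d - 1) := by
    calc A.card ≤ (C.biUnion Γ).card := Finset.card_le_card hAsub
      _ ≤ ∑ c ∈ C, (Γ c).card := Finset.card_biUnion_le
      _ ≤ ∑ _c ∈ C, PmaxLe n (d - 1) := Finset.sum_le_sum fun c _ => hΓcard c
      _ = C.card * PmaxLe n (d - 1) := by rw [Finset.sum_const, smul_eq_mul]
  have hsumf : ∑ σ : Equiv.Perm (Fin n), f σ ≤ C.card * V n (d - 1) := by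
    have hswap : ∑ σ : Equiv.Perm (Fin n), f σ
        = ∑ c ∈ C,
            (Finset.univ.filter fun σ : Equiv.Perm (Fin n) => permDist σ c ≤ d - 1).card := by
      simp only [hfdef, Finset.card_filter]
      exact Finset.sum_comm
    rw [hswap]
    calc ∑ c ∈ C,
          (Finset.univ.filter fun σ : Equiv.Perm (Fin n) => permDist σ c ≤ d - 1).card
        ≤ ∑ _c ∈ C, V n (d - 1) := Finset.sum_le_sum fun c _ => ball_card_le c (d - 1)
      _ = C.card * V n (d - 1) := by rw [Finset.sum_const, smul_eq_mul]
  have hN : (Finset.univ : Finset (Equiv.Perm (Fin n))).card = Nat.factorial n := by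
    rw [Finset.card_univ, Fintype.card_perm, Fintype.card_fin]
  have hAle : A.card ≤ Nat.factorial n := by
    rw [← hN]
    exact Finset.card_le_card (Finset.filter_subset _ _)
  have hsplit : ∑ σ ∈ Finset.univ \ A, f σ + ∑ σ ∈ A, f σ
      = ∑ σ : Equiv.Perm (Fin n), f σ :=
    Finset.sum_sdiff (Finset.subset_univ A)
  have hAsum : ∑ σ ∈ A, f σ = A.card := by
    rw [Finset.sum_congr rfl (fun σ hσ =>
      (Finset.mem_filter.mp hσ).2), Finset.sum_const, smul_eq_mul, mul_one]
  have hrest : 2 * (Nat.factorial n - A.card) ≤ ∑ σ ∈ Finset.univ \ A, f σ := by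
    have h2 : ∀ σ ∈ Finset.univ \ A, 2 ≤ f σ := by
      intro σ hσ
      rw [Finset.mem_sdiff, hAdef, Finset.mem_filter] at hσ
      have := hf1 σ
      have hne1 : f σ ≠ 1 := fun h => hσ.2 ⟨Finset.mem_univ σ, h⟩
      omega
    have := Finset.card_nsmul_le_sum (Finset.univ \ A) f 2 h2
    rw [Finset.card_sdiff_of_subset (Finset.subset_univ A), hN, smul_eq_mul] at this
    rw [Nat.mul_comm]
    exact this
  have hfinal : 2 * Nat.factorial n ≤ A.card + ∑ σ : Equiv.Perm (Fin n), f σ := by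
    omega
  calc 2 * Nat.factorial n ≤ A.card + ∑ σ : Equiv.Perm (Fin n), f σ := hfinal
    _ ≤ C.card * PmaxLe n (d - 1) + C.card * V n (d - 1) := Nat.add_le_add hAcard hsumf
    _ = C.card * (V n (d - 1) + PmaxLe n (d - 1)) := by ring
    _ = Pmax n d * (V n (d - 1) + PmaxLe n (d - 1)) := by rw [hCcard, ← hPdef]
end

section
/- Let n and d be positive integers with d ≤ n, and let C′ be an (n,d) PA of size M. Then P(n,d)·|B(C′)| ≥ n!·M, where B(C′) = {x ∈ S_n : there exists c ∈ C′ with d(x,c) ≤ d−1}. -/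
open Finset

lemma permDist_mul_left {n : ℕ} (g x y : Equiv.Perm (Fin n)) :
    permDist (g * x) (g * y) = permDist x y := by
  unfold permDist
  congr 1
  ext i
  simp [Equiv.Perm.mul_apply, (Equiv.injective g).ne_iff]

theorem stmt13 (n d M : ℕ) (hn : 0 < n) (hd : 0 < d) (hdn : d ≤ n)
    (C' : Finset (Equiv.Perm (Fin n))) (hC' : IsPA n d C') (hM : C'.card = M) :
    Pmax n d *
        (Finset.univ.filter fun x : Equiv.Perm (Fin n) =>
          ∃ c ∈ C', permDist x c ≤ d - 1).card ≥
      Nat.factorial n * M := by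
  classical
  set B := (Finset.univ.filter fun x : Equiv.Perm (Fin n) =>
      ∃ c ∈ C', permDist x c ≤ d - 1) with hBdef
  -- Basic facts about Pmax
  have hbdd : BddAbove {m | ∃ C : Finset (Equiv.Perm (Fin n)), IsPA n d C ∧ C.card = m} := by
    refine ⟨Fintype.card (Equiv.Perm (Fin n)), ?_⟩
    rintro m ⟨C, _, rfl⟩
    exact (Finset.card_le_univ C).trans_eq Finset.card_univ
  have hne : ({m | ∃ C : Finset (Equiv.Perm (Fin n)), IsPA n d C ∧ C.card = m}).Nonempty := by
    refine ⟨0, ∅, ?_, rfl⟩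
    intro x hx
    simp at hx
  have hPm : Pmax n d ∈ {m | ∃ C : Finset (Equiv.Perm (Fin n)), IsPA n d C ∧ C.card = m} :=
    Nat.sSup_mem hne hbdd
  obtain ⟨C, hCPA, hCcard⟩ := hPm
  have hle : ∀ D : Finset (Equiv.Perm (Fin n)), IsPA n d D → D.card ≤ Pmax n d :=
    fun D hD => le_csSup hbdd ⟨D, hD, rfl⟩
  by_contra hcon
  push_neg at hcon
  -- key counting identity
  have hcount : ∀ c : Equiv.Perm (Fin n),
      (Finset.univ.filter fun g : Equiv.Perm (Fin n) =>
        ∃ c' ∈ C', permDist c (g * c') ≤ d - 1).card = B.card := by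
    intro c
    refine Finset.card_bij' (fun g _ => g⁻¹ * c) (fun x _ => c * x⁻¹) ?_ ?_ ?_ ?_
    · intro g hg
      rw [hBdef]
      simp only [Finset.mem_filter, Finset.mem_univ, true_and] at hg ⊢
      obtain ⟨c', hc', hdist⟩ := hg
      refine ⟨c', hc', ?_⟩
      have h2 := permDist_mul_left g⁻¹ c (g * c')
      rw [inv_mul_cancel_left] at h2
      rw [h2]
      exact hdist
    · intro x hx
      rw [hBdef] at hx
      simp only [Finset.mem_filter, Finset.mem_univ, true_and] at hx ⊢
      obtain ⟨c', hc', hdist⟩ := hx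
      refine ⟨c', hc', ?_⟩
      have h2 := permDist_mul_left (c * x⁻¹) x c'
      have h3 : c * x⁻¹ * x = c := by group
      rw [h3] at h2
      rw [mul_assoc] at h2 ⊢
      rw [h2]
      exact hdist
    · intro g _; group
    · intro x _; group
  have hsum : ∑ g : Equiv.Perm (Fin n),
      (C.filter fun c => ∃ c' ∈ C', permDist c (g * c') ≤ d - 1).card
      = C.card * B.card := by
    have : ∀ g : Equiv.Perm (Fin n),
        (C.filter fun c => ∃ c' ∈ C', permDist c (g * c') ≤ d - 1).card
        = ∑ c ∈ C, if (∃ c' ∈ C', permDist c (g * c') ≤ d - 1) then 1 else 0 := by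
      intro g; rw [Finset.card_filter]
    simp_rw [this]
    rw [Finset.sum_comm]
    have : ∀ c ∈ C, (∑ g : Equiv.Perm (Fin n),
        if (∃ c' ∈ C', permDist c (g * c') ≤ d - 1) then 1 else 0) = B.card := by
      intro c _
      rw [← Finset.card_filter]
      exact hcount c
    rw [Finset.sum_congr rfl this, Finset.sum_const, smul_eq_mul]
  -- there exists g with few covered elements of C
  have hex : ∃ g : Equiv.Perm (Fin n),
      (C.filter fun c => ∃ c' ∈ C', permDist c (g * c') ≤ d - 1).card < M := by
    by_contra h
    push_neg at h
    have h1 : Fintype.card (Equiv.Perm (Fin n)) * M ≤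
        ∑ g : Equiv.Perm (Fin n),
          (C.filter fun c => ∃ c' ∈ C', permDist c (g * c') ≤ d - 1).card := by
      rw [← Finset.card_univ, ← smul_eq_mul, ← Finset.sum_const]
      exact Finset.sum_le_sum fun g _ => h g
    rw [hsum, hCcard, Fintype.card_perm, Fintype.card_fin] at h1
    exact absurd hcon (not_lt.mpr h1)
  obtain ⟨g, hg⟩ := hex
  -- exchange argument: build a bigger PA
  set D := (C.filter fun c => ¬ ∃ c' ∈ C', permDist c (g * c') ≤ d - 1) ∪
      C'.image (fun c' => g * c') with hDdef
  have hmemD : ∀ x, x ∈ D ↔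
      (x ∈ C ∧ ¬ ∃ c' ∈ C', permDist x (g * c') ≤ d - 1) ∨ ∃ b ∈ C', g * b = x := by
    intro x
    simp only [hDdef, Finset.mem_union, Finset.mem_filter, Finset.mem_image]
  have hDPA : IsPA n d D := by
    intro x hx y hy hxy
    rw [hmemD] at hx hy
    have key : ∀ u v : Equiv.Perm (Fin n),
        (u ∈ C ∧ ¬ ∃ c' ∈ C', permDist u (g * c') ≤ d - 1) →
        (∃ b ∈ C', g * b = v) → d ≤ permDist u v := by
      rintro u v ⟨_, hu⟩ ⟨b, hb, rfl⟩
      push_neg at hu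
      have := hu b hb
      omega
    rcases hx with hx | hx <;> rcases hy with hy | hy
    · exact hCPA x hx.1 y hy.1 hxy
    · exact key x y hx hy
    · rw [permDist_comm]; exact key y x hy hx
    · obtain ⟨a, ha, rfl⟩ := hx
      obtain ⟨b, hb, rfl⟩ := hy
      rw [permDist_mul_left]
      exact hC' a ha b hb (fun h => hxy (by rw [h]))
  have hDcard : D.card =
      (C.filter fun c => ¬ ∃ c' ∈ C', permDist c (g * c') ≤ d - 1).card + M := by
    rw [hDdef, Finset.card_union_of_disjoint, Finset.card_image_of_injective _
      (mul_right_injective g), hM]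
    rw [Finset.disjoint_right]
    intro x hx hx2
    simp only [Finset.mem_image] at hx
    obtain ⟨b, hb, rfl⟩ := hx
    simp only [Finset.mem_filter] at hx2
    exact hx2.2 ⟨b, hb, by simp [permDist_self]⟩
  have hsplit := Finset.card_filter_add_card_filter_not
    (s := C) (p := fun c => ∃ c' ∈ C', permDist c (g * c') ≤ d - 1)
  have hDle := hle D hDPA
  omega
end

section
/- Let n and d be positive integers with d ≤ n and d even. Then P[n,d−1] ≥ V(n, d/2 − 1) + C(n−1, d/2 − 1)·D_{d/2}. -/
open Finset

lemma card_perm_supp {n : ℕ} (s : Finset (Fin n)) :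
    (univ.filter fun x : Equiv.Perm (Fin n) =>
      (univ.filter fun i => x i ≠ i) = s).card = numDerangements s.card := by
  have key : ∀ x : Equiv.Perm (Fin n),
      ((univ.filter fun i => x i ≠ i) = s ↔ ∀ a, ¬(a ∈ s) ↔ a ∈ Function.fixedPoints x) := by
    intro x
    rw [Finset.ext_iff]
    simp only [mem_filter, mem_univ, true_and, Function.mem_fixedPoints, Function.IsFixedPt]
    constructor <;> intro h a <;> have := h a <;> tauto
  calc (univ.filter fun x : Equiv.Perm (Fin n) => (univ.filter fun i => x i ≠ i) = s).card
      = Fintype.card {x : Equiv.Perm (Fin n) // ∀ a, ¬(a ∈ s) ↔ a ∈ Function.fixedPoints x} := by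
        rw [Fintype.card_subtype]
        congr 1
        exact Finset.filter_congr fun x _ => key x
    _ = Fintype.card (derangements {a : Fin n // a ∈ s}) :=
        (Fintype.card_congr (derangements.subtypeEquiv (· ∈ s))).symm
    _ = numDerangements (Fintype.card {a : Fin n // a ∈ s}) :=
        card_derangements_eq_numDerangements _
    _ = numDerangements s.card := by rw [Fintype.card_coe]

lemma countA {n : ℕ} (r : ℕ) :
    (univ.filter fun x : Equiv.Perm (Fin n) => permWt x ≤ r).card = V n r := by
  rw [Finset.card_eq_sum_card_fiberwise
    (f := fun x : Equiv.Perm (Fin n) => univ.filter fun i => x i ≠ i)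
    (t := (univ : Finset (Finset (Fin n))).filter fun s => s.card ≤ r)
    (fun x hx => by simpa [permWt] using (mem_filter.mp hx).2)]
  have step : ∀ s ∈ (univ : Finset (Finset (Fin n))).filter (fun s => s.card ≤ r),
      ((univ.filter fun x : Equiv.Perm (Fin n) => permWt x ≤ r).filter
        (fun x => (univ.filter fun i => x i ≠ i) = s)).card = numDerangements s.card := by
    intro s hs
    rw [Finset.filter_filter, ← card_perm_supp s]
    congr 1
    apply Finset.filter_congr
    intro x _
    constructor
    · exact fun h => h.2
    · intro h
      refine ⟨?_, h⟩
      rw [permWt, h]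
      exact (mem_filter.mp hs).2
  rw [Finset.sum_congr rfl step]
  rw [← Finset.sum_fiberwise_of_maps_to (g := Finset.card) (t := Finset.range (r + 1))
    (fun s hs => Finset.mem_range.mpr (Nat.lt_succ_of_le (mem_filter.mp hs).2))]
  unfold V
  refine Finset.sum_congr rfl fun i hi => ?_
  have hir : i ≤ r := Nat.lt_succ_iff.mp (Finset.mem_range.mp hi)
  have : ((univ : Finset (Finset (Fin n))).filter (fun s => s.card ≤ r)).filter
      (fun s => s.card = i) = Finset.powersetCard i univ := by
    rw [Finset.powersetCard_eq_filter, Finset.powerset_univ, Finset.filter_filter]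
    apply Finset.filter_congr
    intro s _
    constructor
    · exact fun h => h.2
    · exact fun h => ⟨h ▸ hir, h⟩
  rw [this]
  rw [Finset.sum_congr rfl (fun s hs => by
    rw [(Finset.mem_powersetCard.mp hs).2]), Finset.sum_const, Finset.card_powersetCard,
    Finset.card_univ, Fintype.card_fin, smul_eq_mul]

lemma countB {n m : ℕ} (hn : 0 < n) (hm : 1 ≤ m) :
    (univ.filter fun x : Equiv.Perm (Fin n) => permWt x = m ∧ x ⟨0, hn⟩ ≠ ⟨0, hn⟩).card
      = Nat.choose (n - 1) (m - 1) * numDerangements m := by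
  rw [Finset.card_eq_sum_card_fiberwise
    (f := fun x : Equiv.Perm (Fin n) => univ.filter fun i => x i ≠ i)
    (t := (univ : Finset (Finset (Fin n))).filter fun s => s.card = m ∧ (⟨0, hn⟩ : Fin n) ∈ s)
    (fun x hx => by
      simp only [mem_coe, mem_filter, mem_univ, true_and] at hx ⊢
      exact ⟨hx.1, by simpa using hx.2⟩)]
  have step : ∀ s ∈ (univ : Finset (Finset (Fin n))).filter
      (fun s => s.card = m ∧ (⟨0, hn⟩ : Fin n) ∈ s),
      ((univ.filter fun x : Equiv.Perm (Fin n) => permWt x = m ∧ x ⟨0, hn⟩ ≠ ⟨0, hn⟩).filter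
        (fun x => (univ.filter fun i => x i ≠ i) = s)).card = numDerangements m := by
    intro s hs
    obtain ⟨hcard, hmem⟩ := (mem_filter.mp hs).2
    rw [Finset.filter_filter]
    have : (univ.filter fun x : Equiv.Perm (Fin n) =>
        (permWt x = m ∧ x ⟨0, hn⟩ ≠ ⟨0, hn⟩) ∧ (univ.filter fun i => x i ≠ i) = s)
        = univ.filter fun x : Equiv.Perm (Fin n) => (univ.filter fun i => x i ≠ i) = s := by
      apply Finset.filter_congr
      intro x _
      constructor
      · exact fun h => h.2
      · intro h
        refine ⟨⟨by rw [permWt, h, hcard], ?_⟩, h⟩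
        have := h ▸ hmem
        simpa using (Finset.mem_filter.mp this).2
    rw [this, card_perm_supp, hcard]
  rw [Finset.sum_congr rfl step, Finset.sum_const, smul_eq_mul]
  congr 1
  -- count subsets of size m containing 0
  have hcount : ((univ : Finset (Finset (Fin n))).filter
      (fun s => s.card = m ∧ (⟨0, hn⟩ : Fin n) ∈ s)).card
      = (Finset.powersetCard (m - 1) (univ.erase (⟨0, hn⟩ : Fin n))).card := by
    apply Finset.card_bij (fun s _ => s.erase ⟨0, hn⟩)
    · intro s hs
      obtain ⟨hcard, hmem⟩ := (mem_filter.mp hs).2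
      rw [Finset.mem_powersetCard]
      constructor
      · intro a ha
        rw [Finset.mem_erase] at ha ⊢
        exact ⟨ha.1, Finset.mem_univ a⟩
      · rw [Finset.card_erase_of_mem hmem, hcard]
    · intro s hs t ht hst
      obtain ⟨_, hms⟩ := (mem_filter.mp hs).2
      obtain ⟨_, hmt⟩ := (mem_filter.mp ht).2
      rw [← Finset.insert_erase hms, ← Finset.insert_erase hmt, hst]
    · intro t ht
      rw [Finset.mem_powersetCard] at ht
      refine ⟨insert ⟨0, hn⟩ t, ?_, ?_⟩
      · rw [Finset.mem_filter]
        have h0 : (⟨0, hn⟩ : Fin n) ∉ t := fun h => by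
          have := ht.1 h; simp [Finset.mem_erase] at this
        refine ⟨Finset.mem_univ _, ?_, Finset.mem_insert_self _ _⟩
        rw [Finset.card_insert_of_notMem h0, ht.2]
        omega
      · rw [Finset.erase_insert]
        intro h
        have := ht.1 h
        simp [Finset.mem_erase] at this
  rw [hcount, Finset.card_powersetCard, Finset.card_erase_of_mem (Finset.mem_univ _),
    Finset.card_univ, Fintype.card_fin]

lemma dist_le_wt {n : ℕ} (x y : Equiv.Perm (Fin n)) :
    permDist x y ≤ permWt x + permWt y := by
  have hsub : (univ.filter fun i => x i ≠ y i) ⊆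
      (univ.filter fun i => x i ≠ i) ∪ (univ.filter fun i => y i ≠ i) := by
    intro i hi
    simp only [mem_filter, mem_univ, true_and, mem_union] at hi ⊢
    by_contra h
    push_neg at h
    exact hi (h.1.trans h.2.symm)
  calc permDist x y ≤ _ := Finset.card_le_card hsub
    _ ≤ _ := Finset.card_union_le _ _

lemma dist_le_wt' {n : ℕ} (hn : 0 < n) (x y : Equiv.Perm (Fin n))
    (hx : x ⟨0, hn⟩ ≠ ⟨0, hn⟩) (hy : y ⟨0, hn⟩ ≠ ⟨0, hn⟩) :
    permDist x y + 1 ≤ permWt x + permWt y := by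
  set A := univ.filter fun i => x i ≠ i
  set B := univ.filter fun i => y i ≠ i
  have hsub : (univ.filter fun i => x i ≠ y i) ⊆ A ∪ B := by
    intro i hi
    simp only [A, B, mem_filter, mem_univ, true_and, mem_union] at hi ⊢
    by_contra h
    push_neg at h
    exact hi (h.1.trans h.2.symm)
  have h1 : permDist x y ≤ (A ∪ B).card := Finset.card_le_card hsub
  have h2 : (A ∪ B).card + (A ∩ B).card = A.card + B.card :=
    Finset.card_union_add_card_inter A B
  have h3 : 1 ≤ (A ∩ B).card := by
    rw [Nat.one_le_iff_ne_zero, ← Nat.pos_iff_ne_zero, Finset.card_pos]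
    exact ⟨⟨0, hn⟩, by simp [A, B, hx, hy]⟩
  have h4 : permWt x = A.card := rfl
  have h5 : permWt y = B.card := rfl
  omega

theorem stmt15 (n d : ℕ) (hn : 0 < n) (hd : 0 < d) (hdn : d ≤ n) (heven : Even d) :
    V n (d / 2 - 1) + Nat.choose (n - 1) (d / 2 - 1) * numDerangements (d / 2) ≤
      PmaxLe n (d - 1) := by
  obtain ⟨m, hm⟩ := heven
  have hd2 : d = 2 * m := by omega
  have hm1 : 1 ≤ m := by omega
  have hdiv : d / 2 = m := by omega
  set Γ1 := univ.filter fun x : Equiv.Perm (Fin n) => permWt x ≤ m - 1 with hΓ1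
  set Γ2 := univ.filter fun x : Equiv.Perm (Fin n) => permWt x = m ∧ x ⟨0, hn⟩ ≠ ⟨0, hn⟩ with hΓ2
  have hdisj : Disjoint Γ1 Γ2 := by
    rw [Finset.disjoint_left]
    intro x hx1 hx2
    have h1 := (Finset.mem_filter.mp hx1).2
    have h2 := (Finset.mem_filter.mp hx2).2.1
    omega
  have hcard : (Γ1 ∪ Γ2).card
      = V n (m - 1) + Nat.choose (n - 1) (m - 1) * numDerangements m := by
    rw [Finset.card_union_of_disjoint hdisj, hΓ1, hΓ2, countA, countB hn hm1]
  have hdist : ∀ x ∈ Γ1 ∪ Γ2, ∀ y ∈ Γ1 ∪ Γ2, x ≠ y → permDist x y ≤ d - 1 := by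
    intro x hx y hy _
    rw [Finset.mem_union] at hx hy
    have hwx1 : x ∈ Γ1 → permWt x ≤ m - 1 := fun h => (Finset.mem_filter.mp h).2
    have hwy1 : y ∈ Γ1 → permWt y ≤ m - 1 := fun h => (Finset.mem_filter.mp h).2
    rcases hx with hx | hx <;> rcases hy with hy | hy
    · have := dist_le_wt x y
      have := hwx1 hx; have := hwy1 hy; omega
    · have := dist_le_wt x y
      have := hwx1 hx
      have := (Finset.mem_filter.mp hy).2.1
      omega
    · have := dist_le_wt x y
      have := hwy1 hy
      have := (Finset.mem_filter.mp hx).2.1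
      omega
    · obtain ⟨hwx, hx0⟩ := (Finset.mem_filter.mp hx).2
      obtain ⟨hwy, hy0⟩ := (Finset.mem_filter.mp hy).2
      have := dist_le_wt' hn x y hx0 hy0
      omega
  rw [hdiv]
  rw [← hcard]
  apply le_csSup
  · refine ⟨Fintype.card (Equiv.Perm (Fin n)), fun k hk => ?_⟩
    obtain ⟨Γ, _, hΓ⟩ := hk
    rw [← hΓ, ← Finset.card_univ]
    exact Finset.card_le_univ Γ
  · exact ⟨Γ1 ∪ Γ2, hdist, rfl⟩
end

section
/- Let n and d be positive integers with n ≥ d > 3. Then P(n−1, d−3) ≥ P(n,d). -/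
open Finset

private def yfix {m : ℕ} (x : Equiv.Perm (Fin (m + 1))) : Equiv.Perm (Fin (m + 1)) :=
  (Equiv.swap (x 0) 0) * x

private lemma yfix_zero {m : ℕ} (x : Equiv.Perm (Fin (m + 1))) : yfix x 0 = 0 := by
  simp [yfix, Equiv.swap_apply_left]

private lemma yfix_apply_ne {m : ℕ} (x : Equiv.Perm (Fin (m + 1))) (i : Fin (m + 1))
    (h0 : i ≠ 0) (h1 : x i ≠ 0) : yfix x i = x i := by
  have : yfix x i = Equiv.swap (x 0) 0 (x i) := rfl
  rw [this, Equiv.swap_apply_of_ne_of_ne (fun h => h0 (x.injective h)) h1]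

private lemma dist_yfix {m : ℕ} (x x' : Equiv.Perm (Fin (m + 1))) :
    permDist x x' ≤ permDist (yfix x) (yfix x') + 3 := by
  classical
  set B : Finset (Fin (m + 1)) := {0, x⁻¹ 0, x'⁻¹ 0} with hB
  have hsub : (Finset.univ.filter fun i => x i ≠ x' i) \ B ⊆
      Finset.univ.filter fun i => yfix x i ≠ yfix x' i := by
    intro i hi
    simp only [Finset.mem_sdiff, Finset.mem_filter, Finset.mem_univ, true_and, hB,
      Finset.mem_insert, Finset.mem_singleton] at hi ⊢
    push_neg at hi
    obtain ⟨hxx, h0, hx, hx'⟩ := hi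
    have e1 : x i ≠ 0 := fun h => hx (by rw [← x.symm_apply_apply i, h]; rfl)
    have e2 : x' i ≠ 0 := fun h => hx' (by rw [← x'.symm_apply_apply i, h]; rfl)
    rw [yfix_apply_ne x i h0 e1, yfix_apply_ne x' i h0 e2]
    exact hxx
  have hBcard : B.card ≤ 3 := by
    rw [hB]
    refine le_trans (Finset.card_insert_le _ _) ?_
    have := Finset.card_insert_le (x⁻¹ 0) ({x'⁻¹ 0} : Finset (Fin (m + 1)))
    simp at this ⊢
    omega
  have h1 : permDist x x' - B.card ≤ permDist (yfix x) (yfix x') := by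
    calc permDist x x' - B.card
        ≤ ((Finset.univ.filter fun i => x i ≠ x' i) \ B).card :=
          Finset.le_card_sdiff _ _
      _ ≤ _ := Finset.card_le_card hsub
  omega

private lemma decomposeFin_fst {m : ℕ} (x : Equiv.Perm (Fin (m + 1))) :
    (Equiv.Perm.decomposeFin (yfix x)).1 = 0 := by
  have h := Equiv.Perm.decomposeFin_symm_apply_zero
    (Equiv.Perm.decomposeFin (yfix x)).1 (Equiv.Perm.decomposeFin (yfix x)).2
  rw [Prod.mk.eta, Equiv.symm_apply_apply] at h
  rw [← h]
  exact yfix_zero x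

private lemma yfix_eq_symm {m : ℕ} (x : Equiv.Perm (Fin (m + 1))) :
    yfix x = Equiv.Perm.decomposeFin.symm (0, (Equiv.Perm.decomposeFin (yfix x)).2) := by
  conv_lhs => rw [← Equiv.symm_apply_apply Equiv.Perm.decomposeFin (yfix x)]
  rw [show Equiv.Perm.decomposeFin (yfix x) =
    ((Equiv.Perm.decomposeFin (yfix x)).1, (Equiv.Perm.decomposeFin (yfix x)).2) from rfl,
    decomposeFin_fst]

private lemma yfix_succ {m : ℕ} (x : Equiv.Perm (Fin (m + 1))) (i : Fin m) :
    yfix x i.succ = ((Equiv.Perm.decomposeFin (yfix x)).2 i).succ := by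
  conv_lhs => rw [yfix_eq_symm x]
  rw [Equiv.Perm.decomposeFin_symm_apply_succ]
  simp

private lemma dist_phi {m : ℕ} (x x' : Equiv.Perm (Fin (m + 1))) :
    permDist ((Equiv.Perm.decomposeFin (yfix x)).2) ((Equiv.Perm.decomposeFin (yfix x')).2) =
      permDist (yfix x) (yfix x') := by
  classical
  unfold permDist
  rw [show (Finset.univ.filter fun j => yfix x j ≠ yfix x' j) =
      Finset.map (Fin.succEmb m) (Finset.univ.filter fun i =>
        (Equiv.Perm.decomposeFin (yfix x)).2 i ≠ (Equiv.Perm.decomposeFin (yfix x')).2 i) from ?_,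
    Finset.card_map]
  ext j
  simp only [Finset.mem_filter, Finset.mem_univ, true_and, Finset.mem_map]
  induction j using Fin.cases with
  | zero =>
    simp only [yfix_zero]
    constructor
    · intro h; exact absurd rfl h
    · rintro ⟨i, -, hi⟩
      exact absurd hi (Fin.succ_ne_zero i)
  | succ i =>
    rw [yfix_succ, yfix_succ]
    constructor
    · intro h
      exact ⟨i, fun he => h (congrArg Fin.succ he), rfl⟩
    · rintro ⟨i', hi', he⟩
      have : i' = i := Fin.succ_injective _ he
      subst this
      exact fun hh => hi' (Fin.succ_injective _ hh)

theorem stmt17 (n d : ℕ) (hd : 3 < d) (hdn : d ≤ n) :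
    Pmax (n - 1) (d - 3) ≥ Pmax n d := by
  obtain ⟨m, rfl⟩ : ∃ m, n = m + 1 := ⟨n - 1, by omega⟩
  have hm : m + 1 - 1 = m := rfl
  rw [hm, ge_iff_le]
  unfold Pmax
  apply csSup_le_csSup
  · refine ⟨Fintype.card (Equiv.Perm (Fin m)), ?_⟩
    rintro k ⟨C, -, rfl⟩
    simpa using Finset.card_le_univ C
  · exact ⟨0, ∅, fun x hx => absurd hx (Finset.notMem_empty x), rfl⟩
  · rintro k ⟨C, hC, rfl⟩
    refine ⟨C.image (fun x => (Equiv.Perm.decomposeFin (yfix x)).2), ?_, ?_⟩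
    · intro a ha b hb hab
      simp only [Finset.mem_image] at ha hb
      obtain ⟨x, hx, rfl⟩ := ha
      obtain ⟨x', hx', rfl⟩ := hb
      have hxx : x ≠ x' := by rintro rfl; exact hab rfl
      have h1 := hC x hx x' hx' hxx
      have h2 := dist_yfix x x'
      rw [dist_phi]
      omega
    · rw [Finset.card_image_of_injOn]
      intro x hx x' hx' h
      by_contra hne
      have h1 := hC x hx x' hx' hne
      have h2 := dist_yfix x x'
      have h' : (Equiv.Perm.decomposeFin (yfix x)).2 = (Equiv.Perm.decomposeFin (yfix x')).2 := h
      have h3 : yfix x = yfix x' := by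
        rw [yfix_eq_symm x, yfix_eq_symm x', h']
      rw [h3] at h2
      have h4 : permDist (yfix x') (yfix x') = 0 := by
        simp [permDist]
      omega
end
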